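/- arXiv:1102.2038 — 2 statements merged into one kernel-verified Lean document; each statement's English description precedes it below -/
import Mathlib

section
/- (Almasi–Fischer decomposition.) For every n ∈ ℕ, the space P(n) of ℝ_{0,d}-valued homogeneous polynomials of degree n on ℝ^d decomposes as the direct sum P(n) = ⊕_{k=0}^n x̲^k M(n−k), where M(n−k) is the space of homogeneous Dunkl-monogenic polynomials of degree n−k and x̲^k M(n−k) = { x̲ ↦ x̲^k Q(x̲) : Q ∈ M(n−k) }, with x̲^k the k-th Clifford power of the vector x̲. -/
open scoped BigOperators RealInnerProductSpace

noncomputable section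

/-- Euclidean space `ℝ^d`. -/
abbrev Vd (d : ℕ) := EuclideanSpace ℝ (Fin d)

/-- The reflection `σ_a x = x − 2(⟪a,x⟫/|a|²) a` in the hyperplane orthogonal to `a`. -/
def reflect {d : ℕ} (a x : Vd d) : Vd d := x - ((2 * ⟪a, x⟫) / ⟪a, a⟫) • a

/-- A finite root system `R` with a choice of positive subsystem `Rp` and a `W`-invariant
multiplicity function `kap`. -/
structure DunklData (d : ℕ) where
  R : Finset (Vd d)
  Rp : Finset (Vd d)
  kap : Vd d → ℝ
  zero_not_mem : (0 : Vd d) ∉ R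
  inter_line : ∀ a ∈ R, ∀ c : ℝ, c • a ∈ R → c = 1 ∨ c = -1
  reflect_mem : ∀ a ∈ R, ∀ b ∈ R, reflect a b ∈ R
  Rp_subset : Rp ⊆ R
  pos_split : ∀ a ∈ R, Xor' (a ∈ Rp) (-a ∈ Rp)
  kap_nonneg : ∀ a ∈ R, 0 ≤ kap a
  kap_invariant : ∀ a ∈ R, ∀ b ∈ R, kap (reflect a b) = kap b

/-- The index `γ_κ = Σ_{α ∈ R₊} κ(α)`. -/
def gam {d : ℕ} (S : DunklData d) : ℝ := ∑ a ∈ S.Rp, S.kap a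

/-- The Dunkl dimension `μ = 2γ_κ + d`. -/
def dunklDim {d : ℕ} (S : DunklData d) : ℝ := 2 * gam S + d

variable {d : ℕ} {A : Type*} [NormedRing A] [NormedAlgebra ℝ A]

/-- The Clifford algebra relations `e_i e_j + e_j e_i = −2δ_{ij}` for the generators of
`ℝ_{0,d}`, together with linear independence of the basis products `e_A`. -/
def CliffordRel (e : Fin d → A) : Prop :=
  (∀ i j, e i * e j + e j * e i = if i = j then (-2 : A) else 0) ∧
    LinearIndependent ℝ (fun s : Finset (Fin d) => ((s.sort (· ≤ ·)).map e).prod)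

/-- The Clifford vector `x̲ = Σ x_i e_i` associated to `x ∈ ℝ^d`. -/
def vecC (e : Fin d → A) (x : Vd d) : A := ∑ i, x i • e i

/-- The Dunkl difference quotient `(f(x) − f(σ_a x)) / ⟪a, x⟫`, extended by continuity
(for differentiable `f`) across the hyperplane `⟪a, x⟫ = 0`. -/
def dQuot (a : Vd d) (f : Vd d → A) (x : Vd d) : A :=
  if ⟪a, x⟫ = 0 then (2 / ⟪a, a⟫) • fderiv ℝ f x a
  else (⟪a, x⟫)⁻¹ • (f x - f (reflect a x))

/-- The Dunkl operator `T_{x_i}` on `ℝ^d`. -/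
def dunklT (S : DunklData d) (i : Fin d) (f : Vd d → A) (x : Vd d) : A :=
  fderiv ℝ f x (EuclideanSpace.single i 1) + ∑ a ∈ S.Rp, (S.kap a * a i) • dQuot a f x

/-- The Dunkl-Dirac operator `D̲ = Σ e_i T_{x_i}` on `ℝ^d`. -/
def diracD (e : Fin d → A) (S : DunklData d) (f : Vd d → A) (x : Vd d) : A :=
  ∑ i, e i * dunklT S i f x

namespace AF

universe uF

variable {d : ℕ}

/-- diagonal tuple -/
abbrev dg (n : ℕ) (x : Vd d) : Fin n → Vd d := fun _ => x

section Generic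

variable {F : Type uF} [NormedAddCommGroup F] [NormedSpace ℝ F] {n : ℕ}

lemma contDiff_dg : ContDiff ℝ (⊤:ℕ∞) (fun x : Vd d => dg n x) :=
  contDiff_pi.mpr fun _ => contDiff_id

lemma diag_contDiff (M : ContinuousMultilinearMap ℝ (fun _ : Fin n => Vd d) F) :
    ContDiff ℝ (⊤:ℕ∞) (fun x : Vd d => M (dg n x)) :=
  M.contDiff.comp contDiff_dg

lemma hasFDerivAt_diag (M : ContinuousMultilinearMap ℝ (fun _ : Fin n => Vd d) F) (x : Vd d) :
    HasFDerivAt (fun y : Vd d => M (dg n y))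
      (∑ i, (M.toContinuousLinearMap (dg n x) i)) x := by
  have h := HasFDerivAt.multilinear_comp M (g := fun _ y => y)
    (g' := fun _ => ContinuousLinearMap.id ℝ (Vd d)) (x := x) (fun i => hasFDerivAt_id x)
  simpa [dg] using h

lemma fderiv_diag_apply (M : ContinuousMultilinearMap ℝ (fun _ : Fin n => Vd d) F)
    (x v : Vd d) :
    fderiv ℝ (fun y : Vd d => M (dg n y)) x v
      = ∑ j, M (Function.update (dg n x) j v) := by
  rw [(hasFDerivAt_diag M x).fderiv]
  simp [ContinuousMultilinearMap.toContinuousLinearMap]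

lemma diag_map_smul (M : ContinuousMultilinearMap ℝ (fun _ : Fin n => Vd d) F)
    (c : ℝ) (m : Fin n → Vd d) :
    M (fun i => c • m i) = c ^ n • M m := by
  have h := M.toMultilinearMap.map_smul_univ (fun _ : Fin n => c) m
  simpa [Finset.prod_const] using h

/-- scaling all slots except `j` by `c`. -/
lemma diag_map_smul_except (M : ContinuousMultilinearMap ℝ (fun _ : Fin (n+1) => Vd d) F)
    (c : ℝ) (j : Fin (n+1)) (p q : Fin (n+1) → Vd d)
    (hq : ∀ i, i ≠ j → q i = c • p i) (hj : q j = p j) :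
    M q = c ^ n • M p := by
  have h := M.toMultilinearMap.map_piecewise_smul (fun _ : Fin (n+1) => c) p (Finset.univ.erase j)
  have hcard : (Finset.univ.erase j).card = n := by
    rw [Finset.card_erase_of_mem (Finset.mem_univ j)]
    simp
  have hqp : q = (Finset.univ.erase j).piecewise (fun i => c • p i) p := by
    funext i
    by_cases hi : i = j
    · subst hi
      rw [Finset.piecewise_eq_of_notMem _ _ _ (by simp), hj]
    · rw [Finset.piecewise_eq_of_mem _ _ _ (by simp [hi]), hq i hi]
  rw [hqp]
  simpa [Finset.prod_const, hcard] using h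

lemma diag_telescope (M : ContinuousMultilinearMap ℝ (fun _ : Fin n => Vd d) F) (x y : Vd d) :
    M (dg n x) - M (dg n y)
      = ∑ j : Fin n, M (Function.update
          (fun i : Fin n => if (i:ℕ) < (j:ℕ) then y else x) j (x - y)) := by
  set G : ℕ → F := fun k => M (fun i : Fin n => if (i:ℕ) < k then y else x) with hG
  have h0 : G 0 = M (dg n x) := by simp [hG, dg]
  have hn : G n = M (dg n y) := by
    simp only [hG]
    congr 1
    funext i
    simp [i.isLt, dg]
  have key : ∀ j : Fin n, G (j:ℕ) - G ((j:ℕ)+1)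
      = M (Function.update (fun i : Fin n => if (i:ℕ) < (j:ℕ) then y else x) j (x - y)) := by
    intro j
    set p : Fin n → Vd d := fun i : Fin n => if (i:ℕ) < (j:ℕ) then y else x with hp
    have e1 : (fun i : Fin n => if (i:ℕ) < (j:ℕ) then y else x) = Function.update p j x := by
      funext i
      rw [Function.update_apply]
      by_cases hi : i = j
      · subst hi; simp [hp]
      · simp [hi, hp]
    have e2 : (fun i : Fin n => if (i:ℕ) < (j:ℕ)+1 then y else x) = Function.update p j y := by
      funext i
      rw [Function.update_apply]
      by_cases hi : i = j
      · subst hi; simp [hp]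
      · have hne : (i:ℕ) ≠ (j:ℕ) := fun hc => hi (Fin.val_injective hc)
        have : (i:ℕ) < (j:ℕ)+1 ↔ (i:ℕ) < (j:ℕ) := by omega
        simp [hi, hp, this]
    have hsub := M.toMultilinearMap.map_update_sub p j x y
    calc G (j:ℕ) - G ((j:ℕ)+1)
        = M (Function.update p j x) - M (Function.update p j y) := by
          rw [hG]; simp only []; rw [← e1, ← e2]
      _ = M (Function.update p j (x - y)) := by
          simpa using hsub.symm
  have htel : ∑ k ∈ Finset.range n, (G k - G (k+1)) = G 0 - G n :=
    Finset.sum_range_sub' G n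
  rw [← h0, ← hn, ← htel, Finset.sum_range]
  exact Finset.sum_congr rfl fun j _ => key j

end Generic

end AF
namespace AF
section RepB

variable {d : ℕ} {F : Type uF} [NormedAddCommGroup F] [NormedSpace ℝ F] {n : ℕ}

lemma euler (n : ℕ) (f : Vd d → F) (hf : ContDiff ℝ (⊤:ℕ∞) f)
    (hh : ∀ c : ℝ, c ≠ 0 → ∀ y, f (c • y) = c ^ n • f y) (x : Vd d) :
    fderiv ℝ f x x = (n:ℝ) • f x := by
  have hx : HasDerivAt (fun c : ℝ => c • x) ((1:ℝ) • x) 1 := (hasDerivAt_id 1).smul_const x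
  have h1 : HasDerivAt (fun c : ℝ => f (c • x)) (fderiv ℝ f x x) 1 := by
    have hfd : HasFDerivAt f (fderiv ℝ f x) ((1:ℝ) • x) := by
      rw [one_smul]
      exact (hf.differentiable (by simp) x).hasFDerivAt
    have := hfd.comp_hasDerivAt 1 hx
    simpa [Function.comp_def] using this
  have h2 : HasDerivAt (fun c : ℝ => c ^ n • f x) ((n:ℝ) • f x) 1 := by
    have := (hasDerivAt_pow n (1:ℝ)).smul_const (f x)
    simpa using this
  have h3 : (fun c : ℝ => f (c • x)) =ᶠ[nhds 1] (fun c : ℝ => c ^ n • f x) := by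
    have hne : ∀ᶠ c in nhds (1:ℝ), c ≠ 0 := eventually_ne_nhds one_ne_zero
    filter_upwards [hne] with c hc
    rw [hh c hc x]
  exact (h1.unique (h2.congr_of_eventuallyEq h3)).symm ▸ rfl

theorem rep (n : ℕ) :
    ∀ {F : Type uF} [NormedAddCommGroup F] [NormedSpace ℝ F] (f : Vd d → F),
      ContDiff ℝ (⊤:ℕ∞) f → (∀ c : ℝ, c ≠ 0 → ∀ y, f (c • y) = c ^ n • f y) →
      ∃ M : ContinuousMultilinearMap ℝ (fun _ : Fin n => Vd d) F, ∀ x, f x = M (dg n x) := by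
  induction n with
  | zero =>
    intro F _ _ f hf hh
    refine ⟨ContinuousMultilinearMap.constOfIsEmpty ℝ _ (f 0), fun x => ?_⟩
    have hlim : Filter.Tendsto (fun c : ℝ => f (c • x)) (nhdsWithin 0 {(0:ℝ)}ᶜ) (nhds (f 0)) := by
      have hcont : Filter.Tendsto (fun c : ℝ => f (c • x)) (nhds 0) (nhds (f 0)) := by
        have : Continuous fun c : ℝ => f (c • x) :=
          hf.continuous.comp (continuous_id.smul continuous_const)
        have h := this.tendsto 0
        simpa using h
      exact hcont.mono_left nhdsWithin_le_nhds
    have hconst : Filter.Tendsto (fun c : ℝ => f (c • x)) (nhdsWithin 0 {(0:ℝ)}ᶜ)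
        (nhds (f x)) := by
      have : ∀ c ∈ ({(0:ℝ)}ᶜ : Set ℝ), f (c • x) = f x := by
        intro c hc
        have := hh c hc x
        simpa using this
      refine Filter.Tendsto.congr' ?_ tendsto_const_nhds
      exact Filter.eventuallyEq_of_mem self_mem_nhdsWithin fun c hc => (this c hc).symm
    have := tendsto_nhds_unique hconst hlim
    simp [ContinuousMultilinearMap.constOfIsEmpty_apply, this]
  | succ n ih =>
    intro F _ _ f hf hh
    have hdf : ContDiff ℝ (⊤:ℕ∞) (fderiv ℝ f) := hf.fderiv_right (m := (⊤:ℕ∞)) (by simp)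
    have hdh : ∀ c : ℝ, c ≠ 0 → ∀ y, fderiv ℝ f (c • y) = c ^ n • fderiv ℝ f y := by
      intro c hc x
      set L : Vd d →L[ℝ] Vd d := c • ContinuousLinearMap.id ℝ (Vd d) with hL
      have hLapp : ∀ y, L y = c • y := fun y => rfl
      have h1 : fderiv ℝ (f ∘ L) x = (fderiv ℝ f (c • x)).comp L := by
        have hfd : HasFDerivAt f (fderiv ℝ f (c • x)) (L x) := by
          rw [hLapp]
          exact (hf.differentiable (by simp) (c • x)).hasFDerivAt
        exact (hfd.comp x L.hasFDerivAt).fderiv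
      have h2 : (f ∘ L) = fun y => c ^ (n+1) • f y := by
        funext y
        simp only [Function.comp_apply, hLapp]
        exact hh c hc y
      have h3 : fderiv ℝ (fun y => c ^ (n+1) • f y) x = c ^ (n+1) • fderiv ℝ f x := by
        exact fderiv_fun_const_smul (hf.differentiable (by simp) x) _
      have h4 : (fderiv ℝ f (c • x)).comp L = c ^ (n+1) • fderiv ℝ f x := by
        rw [← h1, h2, h3]
      ext v
      have h5 := congrArg (fun (T : Vd d →L[ℝ] F) => T v) h4
      simp only [ContinuousLinearMap.comp_apply, ContinuousLinearMap.smul_apply, hLapp] at h5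
      have h6 : c • fderiv ℝ f (c • x) v = c ^ (n+1) • fderiv ℝ f x v := by
        rw [← h5, (fderiv ℝ f (c • x)).map_smul]
      have := congrArg (fun z => c⁻¹ • z) h6
      simp only [smul_smul, inv_mul_cancel₀ hc, one_smul] at this
      rw [ContinuousLinearMap.smul_apply, this]
      congr 1
      field_simp
      ring
    obtain ⟨N, hN⟩ := ih (fderiv ℝ f) hdf hdh
    refine ⟨((n+1:ℝ)⁻¹) • N.uncurryRight, fun x => ?_⟩
    have heu := euler (n+1) f hf hh x
    have happ : N.uncurryRight (dg (n+1) x) = N (dg n x) x := by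
      rw [ContinuousMultilinearMap.uncurryRight_apply]
      rfl
    rw [ContinuousMultilinearMap.smul_apply, happ, ← hN x, heu]
    rw [smul_smul]
    have hne : ((n:ℝ)+1) ≠ 0 := by positivity
    rw [show ((n+1 : ℕ):ℝ) = (n:ℝ)+1 by push_cast; ring, inv_mul_cancel₀ hne, one_smul]

end RepB
end AF
namespace AF
section Ops

variable {d : ℕ} {A : Type*} [NormedRing A] [NormedAlgebra ℝ A] {n : ℕ}

lemma reflect_of_inner_zero {a x : Vd d} (h : ⟪a,x⟫ = 0) : reflect a x = x := by
  simp [reflect, h]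

lemma reflect_smulv (a : Vd d) (c : ℝ) (x : Vd d) : reflect a (c • x) = c • reflect a x := by
  unfold reflect
  rw [real_inner_smul_right, smul_sub, smul_smul]
  have : 2 * (c * ⟪a,x⟫) / ⟪a,a⟫ = c * (2 * ⟪a,x⟫ / ⟪a,a⟫) := by ring
  rw [this]

lemma reflect_contDiff (a : Vd d) : ContDiff ℝ (⊤:ℕ∞) (reflect a) := by
  unfold reflect
  have h1 : ContDiff ℝ (⊤:ℕ∞) (fun x : Vd d => 2 * ⟪a,x⟫ / ⟪a,a⟫) := by
    have : (fun x : Vd d => 2 * ⟪a,x⟫ / ⟪a,a⟫) = fun x => 2 * innerSL ℝ a x / ⟪a,a⟫ := by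
      funext x; simp
    rw [this]
    exact (contDiff_const.mul (innerSL ℝ a).contDiff).div_const _
  exact contDiff_id.sub (h1.smul contDiff_const)

lemma sub_reflect (a x : Vd d) : x - reflect a x = (2 * ⟪a,x⟫ / ⟪a,a⟫) • a := by
  simp [reflect]

lemma inner_smul_dQuot (a : Vd d) (f : Vd d → A) (x : Vd d) :
    ⟪a,x⟫ • dQuot a f x = f x - f (reflect a x) := by
  unfold dQuot
  split_ifs with h
  · simp [h, reflect_of_inner_zero h]
  · rw [smul_smul, mul_inv_cancel₀ h, one_smul]

/-- mixed tuple appearing in the difference formula -/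
def mix (a x : Vd d) (j : Fin n) : Fin n → Vd d :=
  fun i => if (i:ℕ) < (j:ℕ) then reflect a x else x

lemma dQuot_diag (a : Vd d) (M : ContinuousMultilinearMap ℝ (fun _ : Fin n => Vd d) A)
    (x : Vd d) :
    dQuot a (fun y => M (dg n y)) x
      = (2 / ⟪a,a⟫) • ∑ j : Fin n, M (Function.update (mix a x j) j a) := by
  unfold dQuot
  split_ifs with h
  · rw [fderiv_diag_apply]
    congr 1
    refine Finset.sum_congr rfl fun j _ => ?_
    congr 1
    funext i
    rw [Function.update_apply, Function.update_apply]
    simp [mix, reflect_of_inner_zero h, dg]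
  · have htel : M (dg n x) - M (dg n (reflect a x))
        = ∑ j : Fin n, M (Function.update (mix a x j) j (x - reflect a x)) :=
      diag_telescope M x (reflect a x)
    have hxy : x - reflect a x = (2 * ⟪a,x⟫ / ⟪a,a⟫) • a := sub_reflect a x
    rw [htel, hxy]
    have hterm : ∀ j ∈ Finset.univ, M (Function.update (mix a x j) j ((2 * ⟪a,x⟫ / ⟪a,a⟫) • a))
        = (2 * ⟪a,x⟫ / ⟪a,a⟫) • M (Function.update (mix a x j) j a) :=
      fun j _ => M.map_update_smul _ j _ a
    rw [Finset.sum_congr rfl hterm, ← Finset.smul_sum, smul_smul]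
    congr 1
    set t := (⟪a,x⟫:ℝ) with ht
    set s := (⟪a,a⟫:ℝ) with hs
    field_simp

lemma dQuot_diag_contDiff (a : Vd d) (M : ContinuousMultilinearMap ℝ (fun _ : Fin n => Vd d) A) :
    ContDiff ℝ (⊤:ℕ∞) (dQuot a (fun y => M (dg n y))) := by
  have heq : dQuot a (fun y => M (dg n y))
      = fun x => (2 / ⟪a,a⟫) • ∑ j : Fin n, M (Function.update (mix a x j) j a) :=
    funext (dQuot_diag a M)
  rw [heq]
  refine ContDiff.const_smul _ (ContDiff.sum fun j _ => ?_)
  refine M.contDiff.comp (contDiff_pi.mpr fun i => ?_)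
  have : (fun x : Vd d => Function.update (mix a x j) j a i)
      = fun x : Vd d => if i = j then a else (if (i:ℕ) < (j:ℕ) then reflect a x else x) := by
    funext x; rw [Function.update_apply]; rfl
  rw [this]
  by_cases hij : i = j
  · simp only [hij, if_true]; exact contDiff_const
  · simp only [hij, if_false]
    by_cases hlt : (i:ℕ) < (j:ℕ)
    · simp only [hlt, if_true]; exact reflect_contDiff a
    · simp only [hlt, if_false]; exact contDiff_id

lemma fderiv_diag_contDiff (M : ContinuousMultilinearMap ℝ (fun _ : Fin n => Vd d) A)
    (v : Vd d) : ContDiff ℝ (⊤:ℕ∞) (fun x => fderiv ℝ (fun y => M (dg n y)) x v) := by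
  have heq : (fun x => fderiv ℝ (fun y => M (dg n y)) x v)
      = fun x => ∑ j : Fin n, M (Function.update (dg n x) j v) :=
    funext fun x => fderiv_diag_apply M x v
  rw [heq]
  refine ContDiff.sum fun j _ => ?_
  refine M.contDiff.comp (contDiff_pi.mpr fun i => ?_)
  have : (fun x : Vd d => Function.update (dg n x) j v i)
      = fun x : Vd d => if i = j then v else x := by
    funext x; rw [Function.update_apply]
  rw [this]
  by_cases hij : i = j
  · simp only [hij, if_true]; exact contDiff_const
  · simp only [hij, if_false]; exact contDiff_id

lemma dunklT_diag_contDiff (S : DunklData d) (i : Fin d)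
    (M : ContinuousMultilinearMap ℝ (fun _ : Fin n => Vd d) A) :
    ContDiff ℝ (⊤:ℕ∞) (dunklT S i (fun y => M (dg n y))) := by
  unfold dunklT
  exact (fderiv_diag_contDiff M _).add
    (ContDiff.sum fun a _ => (dQuot_diag_contDiff a M).const_smul _)

lemma diracD_diag_contDiff (e : Fin d → A) (S : DunklData d)
    (M : ContinuousMultilinearMap ℝ (fun _ : Fin n => Vd d) A) :
    ContDiff ℝ (⊤:ℕ∞) (diracD e S (fun y => M (dg n y))) := by
  unfold diracD
  exact ContDiff.sum fun i _ => contDiff_const.mul (dunklT_diag_contDiff S i M)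

lemma fderiv_diag_homog (M : ContinuousMultilinearMap ℝ (fun _ : Fin (n+1) => Vd d) A)
    (c : ℝ) (x v : Vd d) :
    fderiv ℝ (fun y => M (dg (n+1) y)) (c • x) v
      = c ^ n • fderiv ℝ (fun y => M (dg (n+1) y)) x v := by
  rw [fderiv_diag_apply, fderiv_diag_apply, Finset.smul_sum]
  refine Finset.sum_congr rfl fun j _ => ?_
  refine diag_map_smul_except M c j _ _ (fun i hi => ?_) ?_
  · rw [Function.update_apply, Function.update_apply]
    simp [hi, dg]
  · simp

lemma dQuot_diag_homog (a : Vd d) (M : ContinuousMultilinearMap ℝ (fun _ : Fin (n+1) => Vd d) A)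
    (c : ℝ) (x : Vd d) :
    dQuot a (fun y => M (dg (n+1) y)) (c • x)
      = c ^ n • dQuot a (fun y => M (dg (n+1) y)) x := by
  rw [dQuot_diag, dQuot_diag]
  have hsum : ∑ j : Fin (n+1), M (Function.update (mix a (c • x) j) j a)
      = c ^ n • ∑ j : Fin (n+1), M (Function.update (mix a x j) j a) := by
    rw [Finset.smul_sum]
    refine Finset.sum_congr rfl fun j _ => ?_
    refine diag_map_smul_except M c j _ _ (fun i hi => ?_) ?_
    · rw [Function.update_apply, Function.update_apply]
      simp only [hi, if_false]
      unfold mix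
      split_ifs with hlt
      · rw [reflect_smulv]
      · rfl
    · simp
  rw [hsum]
  exact smul_comm _ _ _

lemma dunklT_diag_homog (S : DunklData d) (i : Fin d)
    (M : ContinuousMultilinearMap ℝ (fun _ : Fin (n+1) => Vd d) A) (c : ℝ) (x : Vd d) :
    dunklT S i (fun y => M (dg (n+1) y)) (c • x)
      = c ^ n • dunklT S i (fun y => M (dg (n+1) y)) x := by
  unfold dunklT
  rw [fderiv_diag_homog, smul_add, Finset.smul_sum]
  congr 1
  refine Finset.sum_congr rfl fun a _ => ?_
  rw [dQuot_diag_homog]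
  exact smul_comm _ _ _

lemma diracD_diag_homog (e : Fin d → A) (S : DunklData d)
    (M : ContinuousMultilinearMap ℝ (fun _ : Fin (n+1) => Vd d) A) (c : ℝ) (x : Vd d) :
    diracD e S (fun y => M (dg (n+1) y)) (c • x)
      = c ^ n • diracD e S (fun y => M (dg (n+1) y)) x := by
  unfold diracD
  rw [Finset.smul_sum]
  refine Finset.sum_congr rfl fun i _ => ?_
  rw [dunklT_diag_homog, mul_smul_comm]

end Ops
end AF
namespace AF
section Lin

variable {d : ℕ} {A : Type*} [NormedRing A] [NormedAlgebra ℝ A]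

lemma cd_top {f : Vd d → A} (hf : ContDiff ℝ (⊤:ℕ∞) f) (x : Vd d) : DifferentiableAt ℝ f x :=
  hf.differentiable (by simp) x

lemma dQuot_add (a : Vd d) {f g : Vd d → A} (hf : ContDiff ℝ (⊤:ℕ∞) f)
    (hg : ContDiff ℝ (⊤:ℕ∞) g) (x : Vd d) :
    dQuot a (fun y => f y + g y) x = dQuot a f x + dQuot a g x := by
  unfold dQuot
  split_ifs with h
  · rw [fderiv_fun_add (cd_top hf x) (cd_top hg x)]
    simp [smul_add]
  · rw [← smul_add]
    congr 1
    beta_reduce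
    abel

lemma dQuot_sub (a : Vd d) {f g : Vd d → A} (hf : ContDiff ℝ (⊤:ℕ∞) f)
    (hg : ContDiff ℝ (⊤:ℕ∞) g) (x : Vd d) :
    dQuot a (fun y => f y - g y) x = dQuot a f x - dQuot a g x := by
  unfold dQuot
  split_ifs with h
  · rw [fderiv_fun_sub (cd_top hf x) (cd_top hg x)]
    simp [smul_sub]
  · rw [← smul_sub]
    congr 1
    beta_reduce
    abel

lemma dQuot_const_smul (a : Vd d) (r : ℝ) {f : Vd d → A} (hf : ContDiff ℝ (⊤:ℕ∞) f) (x : Vd d) :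
    dQuot a (fun y => r • f y) x = r • dQuot a f x := by
  unfold dQuot
  split_ifs with h
  · rw [fderiv_fun_const_smul (cd_top hf x), ContinuousLinearMap.smul_apply]
    exact smul_comm _ _ _
  · rw [← smul_sub, smul_comm]

lemma dQuot_const_mul (a : Vd d) (b : A) {f : Vd d → A} (hf : ContDiff ℝ (⊤:ℕ∞) f) (x : Vd d) :
    dQuot a (fun y => b * f y) x = b * dQuot a f x := by
  have hfd : ∀ z, fderiv ℝ (fun y => b * f y) z = ((ContinuousLinearMap.mul ℝ A) b).comp (fderiv ℝ f z) := by
    intro z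
    exact (((ContinuousLinearMap.mul ℝ A) b).hasFDerivAt.comp z (cd_top hf z).hasFDerivAt).fderiv
  unfold dQuot
  split_ifs with h
  · rw [hfd]
    simp [mul_smul_comm]
  · rw [← mul_sub, mul_smul_comm]

lemma dQuot_zero (a : Vd d) (x : Vd d) : dQuot a (fun _ : Vd d => (0:A)) x = 0 := by
  unfold dQuot
  split_ifs with h <;> simp

lemma dunklT_add (S : DunklData d) (i : Fin d) {f g : Vd d → A} (hf : ContDiff ℝ (⊤:ℕ∞) f)
    (hg : ContDiff ℝ (⊤:ℕ∞) g) (x : Vd d) :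
    dunklT S i (fun y => f y + g y) x = dunklT S i f x + dunklT S i g x := by
  unfold dunklT
  rw [fderiv_fun_add (cd_top hf x) (cd_top hg x)]
  have : ∀ a ∈ S.Rp, (S.kap a * a i) • dQuot a (fun y => f y + g y) x
      = (S.kap a * a i) • dQuot a f x + (S.kap a * a i) • dQuot a g x := by
    intro a _
    rw [dQuot_add a hf hg x, smul_add]
  rw [Finset.sum_congr rfl this, Finset.sum_add_distrib]
  simp only [ContinuousLinearMap.add_apply]
  abel

lemma dunklT_sub (S : DunklData d) (i : Fin d) {f g : Vd d → A} (hf : ContDiff ℝ (⊤:ℕ∞) f)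
    (hg : ContDiff ℝ (⊤:ℕ∞) g) (x : Vd d) :
    dunklT S i (fun y => f y - g y) x = dunklT S i f x - dunklT S i g x := by
  unfold dunklT
  rw [fderiv_fun_sub (cd_top hf x) (cd_top hg x)]
  have : ∀ a ∈ S.Rp, (S.kap a * a i) • dQuot a (fun y => f y - g y) x
      = (S.kap a * a i) • dQuot a f x - (S.kap a * a i) • dQuot a g x := by
    intro a _
    rw [dQuot_sub a hf hg x, smul_sub]
  rw [Finset.sum_congr rfl this, Finset.sum_sub_distrib]
  simp only [ContinuousLinearMap.sub_apply]
  abel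

lemma dunklT_const_smul (S : DunklData d) (i : Fin d) (r : ℝ) {f : Vd d → A}
    (hf : ContDiff ℝ (⊤:ℕ∞) f) (x : Vd d) :
    dunklT S i (fun y => r • f y) x = r • dunklT S i f x := by
  unfold dunklT
  rw [fderiv_fun_const_smul (cd_top hf x)]
  have : ∀ a ∈ S.Rp, (S.kap a * a i) • dQuot a (fun y => r • f y) x
      = r • ((S.kap a * a i) • dQuot a f x) := by
    intro a _
    rw [dQuot_const_smul a r hf x, smul_comm]
  rw [Finset.sum_congr rfl this, ← Finset.smul_sum, smul_add]
  simp [smul_comm]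

lemma dunklT_const_mul (S : DunklData d) (i : Fin d) (b : A) {f : Vd d → A}
    (hf : ContDiff ℝ (⊤:ℕ∞) f) (x : Vd d) :
    dunklT S i (fun y => b * f y) x = b * dunklT S i f x := by
  unfold dunklT
  have hfd : fderiv ℝ (fun y => b * f y) x = ((ContinuousLinearMap.mul ℝ A) b).comp (fderiv ℝ f x) :=
    (((ContinuousLinearMap.mul ℝ A) b).hasFDerivAt.comp x (cd_top hf x).hasFDerivAt).fderiv
  rw [hfd, mul_add, Finset.mul_sum]
  have : ∀ a ∈ S.Rp, (S.kap a * a i) • dQuot a (fun y => b * f y) x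
      = b * ((S.kap a * a i) • dQuot a f x) := by
    intro a _
    rw [dQuot_const_mul a b hf x, mul_smul_comm]
  rw [Finset.sum_congr rfl this]
  simp [ContinuousLinearMap.comp_apply, ContinuousLinearMap.mul_apply']

lemma dunklT_zero (S : DunklData d) (i : Fin d) (x : Vd d) :
    dunklT S i (fun _ : Vd d => (0:A)) x = 0 := by
  unfold dunklT
  simp [dQuot_zero]

lemma diracD_zero (e : Fin d → A) (S : DunklData d) (x : Vd d) :
    diracD e S (fun _ : Vd d => (0:A)) x = 0 := by
  unfold diracD
  simp [dunklT_zero]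

lemma diracD_add (e : Fin d → A) (S : DunklData d) {f g : Vd d → A}
    (hf : ContDiff ℝ (⊤:ℕ∞) f) (hg : ContDiff ℝ (⊤:ℕ∞) g) (x : Vd d) :
    diracD e S (fun y => f y + g y) x = diracD e S f x + diracD e S g x := by
  unfold diracD
  rw [← Finset.sum_add_distrib]
  refine Finset.sum_congr rfl fun i _ => ?_
  rw [dunklT_add S i hf hg x, mul_add]

lemma diracD_sub (e : Fin d → A) (S : DunklData d) {f g : Vd d → A}
    (hf : ContDiff ℝ (⊤:ℕ∞) f) (hg : ContDiff ℝ (⊤:ℕ∞) g) (x : Vd d) :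
    diracD e S (fun y => f y - g y) x = diracD e S f x - diracD e S g x := by
  unfold diracD
  rw [← Finset.sum_sub_distrib]
  refine Finset.sum_congr rfl fun i _ => ?_
  rw [dunklT_sub S i hf hg x, mul_sub]

lemma diracD_const_smul (e : Fin d → A) (S : DunklData d) (r : ℝ) {f : Vd d → A}
    (hf : ContDiff ℝ (⊤:ℕ∞) f) (x : Vd d) :
    diracD e S (fun y => r • f y) x = r • diracD e S f x := by
  unfold diracD
  rw [Finset.smul_sum]
  refine Finset.sum_congr rfl fun i _ => ?_
  rw [dunklT_const_smul S i r hf x, mul_smul_comm]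

lemma diracD_sum {ι : Type*} (e : Fin d → A) (S : DunklData d) (s : Finset ι)
    (F : ι → Vd d → A) (hF : ∀ i ∈ s, ContDiff ℝ (⊤:ℕ∞) (F i)) (x : Vd d) :
    diracD e S (fun y => ∑ i ∈ s, F i y) x = ∑ i ∈ s, diracD e S (F i) x := by
  classical
  induction s using Finset.induction_on with
  | empty => simpa using diracD_zero e S x
  | insert b t hni ih =>
    have hFb : ContDiff ℝ (⊤:ℕ∞) (F b) := hF b (Finset.mem_insert_self b t)
    have hFt : ContDiff ℝ (⊤:ℕ∞) (fun y => ∑ i ∈ t, F i y) :=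
      ContDiff.sum fun i hi => hF i (Finset.mem_insert_of_mem hi)
    have : (fun y => ∑ i ∈ insert b t, F i y) = fun y => F b y + ∑ i ∈ t, F i y := by
      funext y
      rw [Finset.sum_insert hni]
    rw [this, diracD_add e S hFb hFt x, Finset.sum_insert hni,
      ih (fun i hi => hF i (Finset.mem_insert_of_mem hi))]

end Lin
end AF
namespace AF
section Cliff

variable {d : ℕ} {A : Type*} [NormedRing A] [NormedAlgebra ℝ A]

lemma smul_one_mul' (r : ℝ) (t : A) : (r • (1:A)) * t = r • t := by
  rw [smul_mul_assoc, one_mul]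

lemma neg_two_A : (-2 : A) = (-2:ℝ) • (1:A) := by
  rw [← Algebra.algebraMap_eq_smul_one, map_neg, map_ofNat]

lemma ei_sq {e : Fin d → A}
    (hrel : ∀ i j, e i * e j + e j * e i = if i = j then (-2:A) else 0) (i : Fin d) :
    e i * e i = (-1 : A) := by
  have h := hrel i i
  rw [if_pos rfl] at h
  have h2 : (2:ℝ) • (e i * e i) = (-2:ℝ) • (1:A) := by
    rw [two_smul, h, neg_two_A]
  have h3 := congrArg (fun z => (2⁻¹:ℝ) • z) h2
  simp only [smul_smul] at h3
  norm_num at h3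
  exact h3

lemma inner_eq_sum (v w : Vd d) : ⟪v,w⟫ = ∑ i, v i * w i := by
  simp [PiLp.inner_apply, RCLike.inner_apply, conj_trivial, mul_comm]

lemma vecC_smul (e : Fin d → A) (c : ℝ) (x : Vd d) : vecC e (c • x) = c • vecC e x := by
  unfold vecC
  rw [Finset.smul_sum]
  refine Finset.sum_congr rfl fun i _ => ?_
  rw [PiLp.smul_apply, smul_eq_mul, mul_smul]

lemma vecC_contDiff (e : Fin d → A) : ContDiff ℝ (⊤:ℕ∞) (vecC e) := by
  unfold vecC
  refine ContDiff.sum fun i _ => ?_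
  have : (fun x : Vd d => x i • e i) = fun x => (EuclideanSpace.proj (𝕜:=ℝ) i) x • e i := rfl
  rw [this]
  exact (EuclideanSpace.proj (𝕜:=ℝ) i).contDiff.smul contDiff_const

lemma vecC_mul_expand (e : Fin d → A) (v : Vd d) (b : A) :
    vecC e v * (vecC e v * b) = ∑ i, ∑ j, (v i * v j) • (e i * (e j * b)) := by
  unfold vecC
  rw [Finset.sum_mul]
  refine Finset.sum_congr rfl fun i _ => ?_
  rw [smul_mul_assoc, Finset.sum_mul, Finset.mul_sum, Finset.smul_sum]
  refine Finset.sum_congr rfl fun j _ => ?_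
  rw [smul_mul_assoc, mul_smul_comm, smul_smul]

lemma vecC_sq {e : Fin d → A}
    (hrel : ∀ i j, e i * e j + e j * e i = if i = j then (-2:A) else 0) (v : Vd d) :
    vecC e v * vecC e v = -(⟪v,v⟫ • (1:A)) := by
  have h1 : vecC e v * vecC e v = ∑ i, ∑ j, (v i * v j) • (e i * e j) := by
    have := vecC_mul_expand e v 1
    simpa [mul_one] using this
  have h2 : vecC e v * vecC e v = ∑ i, ∑ j, (v i * v j) • (e j * e i) := by
    rw [h1, Finset.sum_comm]
    refine Finset.sum_congr rfl fun j _ => Finset.sum_congr rfl fun i _ => ?_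
    rw [mul_comm (v j) (v i)]
  have h3 : (2:ℝ) • (vecC e v * vecC e v) = ∑ i, ∑ j, (v i * v j) • (e i * e j + e j * e i) := by
    rw [two_smul]
    nth_rewrite 1 [h1]
    nth_rewrite 1 [h2]
    rw [← Finset.sum_add_distrib]
    refine Finset.sum_congr rfl fun i _ => ?_
    rw [← Finset.sum_add_distrib]
    refine Finset.sum_congr rfl fun j _ => ?_
    rw [smul_add]
  have h4 : (2:ℝ) • (vecC e v * vecC e v) = (⟪v,v⟫ : ℝ) • ((-2:ℝ) • (1:A)) := by
    rw [h3]
    have : ∀ i ∈ (Finset.univ : Finset (Fin d)), ∑ j, (v i * v j) • (e i * e j + e j * e i)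
        = (v i * v i) • ((-2:ℝ) • (1:A)) := by
      intro i _
      rw [Finset.sum_eq_single i]
      · rw [hrel i i, if_pos rfl, neg_two_A]
      · intro j _ hj
        rw [hrel i j, if_neg (fun hc => hj hc.symm), smul_zero]
      · intro hi; exact absurd (Finset.mem_univ i) hi
    rw [Finset.sum_congr rfl this, ← Finset.sum_smul, inner_eq_sum]
  have h5 := congrArg (fun z => (2⁻¹:ℝ) • z) h4
  simp only [smul_smul] at h5
  have e1 : (2⁻¹ * 2 : ℝ) = 1 := by norm_num
  rw [e1, one_smul] at h5
  rw [h5, ← neg_smul]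
  congr 1
  ring
end Cliff
end AF
namespace AF
section Coord

variable {d : ℕ} {A : Type*} [NormedRing A] [NormedAlgebra ℝ A]

lemma sum_smul_single (x : Vd d) : (∑ i, x i • EuclideanSpace.single i (1:ℝ)) = x := by
  have h := (EuclideanSpace.basisFun (Fin d) ℝ).toBasis.sum_repr x
  simp only [OrthonormalBasis.coe_toBasis_repr_apply, EuclideanSpace.basisFun_repr,
    OrthonormalBasis.coe_toBasis, EuclideanSpace.basisFun_apply] at h
  exact h

lemma fderiv_coord_smul (j : Fin d) {g : Vd d → A} (hg : ContDiff ℝ (⊤:ℕ∞) g) (x v : Vd d) :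
    fderiv ℝ (fun y => y j • g y) x v = v j • g x + x j • fderiv ℝ g x v := by
  have hc : DifferentiableAt ℝ (fun y : Vd d => y j) x := by
    have : (fun y : Vd d => y j) = fun y => (EuclideanSpace.proj (𝕜:=ℝ) j) y := rfl
    rw [this]
    exact (EuclideanSpace.proj (𝕜:=ℝ) j).differentiableAt
  have h := fderiv_fun_smul hc (cd_top hg x)
  have happ := congrArg (fun (T : Vd d →L[ℝ] A) => T v) h
  simp only [ContinuousLinearMap.add_apply, ContinuousLinearMap.smul_apply,
    ContinuousLinearMap.smulRight_apply] at happ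
  have hcf : fderiv ℝ (fun y : Vd d => y j) x v = v j := by
    have : (fun y : Vd d => y j) = fun y => (EuclideanSpace.proj (𝕜:=ℝ) j) y := rfl
    rw [this, ContinuousLinearMap.fderiv]
    rfl
  rw [happ, hcf, add_comm]

lemma reflect_coord (a x : Vd d) (j : Fin d) :
    (reflect a x) j = x j - (2 * ⟪a,x⟫ / ⟪a,a⟫) * a j := by
  unfold reflect
  rw [PiLp.sub_apply, PiLp.smul_apply, smul_eq_mul]

lemma dQuot_coord_mul (a : Vd d) (ha : (⟪a,a⟫:ℝ) ≠ 0) (j : Fin d) {g : Vd d → A}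
    (hg : ContDiff ℝ (⊤:ℕ∞) g) (x : Vd d) :
    dQuot a (fun y => y j • g y) x
      = x j • dQuot a g x + ((2 * a j) / ⟪a,a⟫) • g (reflect a x) := by
  unfold dQuot
  split_ifs with h
  · rw [fderiv_coord_smul j hg x a, reflect_of_inner_zero h, smul_add, smul_smul, smul_smul]
    have e1 : (2/⟪a,a⟫) * a j = (2 * a j)/⟪a,a⟫ := by ring
    have e2 : (2/⟪a,a⟫) * x j = x j * (2/⟪a,a⟫) := by ring
    rw [e1, e2, ← smul_smul, add_comm]
  · simp only []
    rw [reflect_coord a x j, sub_smul]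
    set t := (⟪a,x⟫:ℝ) with ht
    set s := (⟪a,a⟫:ℝ) with hs
    set u := g x
    set w := g (reflect a x)
    set c := x j
    have e3 : c • u - (c • w - ((2 * t / s) * a j) • w) = c • (u - w) + ((2 * t / s) * a j) • w := by
      rw [smul_sub]
      abel
    calc t⁻¹ • (c • u - (c • w - (2 * t / s * a j) • w))
        = t⁻¹ • (c • (u - w) + (2 * t / s * a j) • w) := by rw [e3]
      _ = c • t⁻¹ • (u - w) + (t⁻¹ * (2 * t / s * a j)) • w := by
          rw [smul_add, smul_smul, smul_smul, mul_comm t⁻¹ c, ← smul_smul]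
      _ = c • t⁻¹ • (u - w) + (2 * a j / s) • w := by
          congr 2
          field_simp
end Coord
end AF
namespace AF
section Anti

variable {d : ℕ} {A : Type*} [NormedRing A] [NormedAlgebra ℝ A]

lemma contDiff_proj (j : Fin d) : ContDiff ℝ (⊤:ℕ∞) (fun y : Vd d => y j) :=
  (EuclideanSpace.proj (𝕜:=ℝ) j).contDiff

lemma dunklT_coord_mul (S : DunklData d) (hS : ∀ α ∈ S.Rp, (⟪α,α⟫:ℝ) ≠ 0) (i j : Fin d)
    {g : Vd d → A} (hg : ContDiff ℝ (⊤:ℕ∞) g) (x : Vd d) :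
    dunklT S i (fun y => y j • g y) x
      = x j • dunklT S i g x + ((EuclideanSpace.single i (1:ℝ) : Vd d) j) • g x
        + ∑ α ∈ S.Rp, ((S.kap α * α i) * ((2 * α j) / ⟪α,α⟫)) • g (reflect α x) := by
  unfold dunklT
  rw [fderiv_coord_smul j hg x (EuclideanSpace.single i 1)]
  have hsum : ∀ α ∈ S.Rp, (S.kap α * α i) • dQuot α (fun y => y j • g y) x
      = x j • ((S.kap α * α i) • dQuot α g x)
        + ((S.kap α * α i) * ((2 * α j) / ⟪α,α⟫)) • g (reflect α x) := by
    intro α hα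
    rw [dQuot_coord_mul α (hS α hα) j hg x]
    module
  rw [Finset.sum_congr rfl hsum, Finset.sum_add_distrib, smul_add, Finset.smul_sum]
  abel

lemma euler_T (S : DunklData d) {f : Vd d → A} (hf : ContDiff ℝ (⊤:ℕ∞) f) (x : Vd d) :
    ∑ i, x i • dunklT S i f x
      = fderiv ℝ f x x + ∑ α ∈ S.Rp, S.kap α • (f x - f (reflect α x)) := by
  unfold dunklT
  have hsplit : ∑ i, x i • (fderiv ℝ f x (EuclideanSpace.single i 1)
      + ∑ α ∈ S.Rp, (S.kap α * α i) • dQuot α f x)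
      = (∑ i, x i • fderiv ℝ f x (EuclideanSpace.single i 1))
        + ∑ i, x i • ∑ α ∈ S.Rp, (S.kap α * α i) • dQuot α f x := by
    rw [← Finset.sum_add_distrib]
    exact Finset.sum_congr rfl fun i _ => smul_add _ _ _
  rw [hsplit]
  congr 1
  · have h2 : ∑ i, x i • fderiv ℝ f x (EuclideanSpace.single i 1)
        = fderiv ℝ f x (∑ i, x i • EuclideanSpace.single i 1) := by
      rw [map_sum]
      exact Finset.sum_congr rfl fun i _ => ((fderiv ℝ f x).map_smul _ _).symm
    rw [h2, sum_smul_single]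
  · have hswap : ∑ i, x i • ∑ α ∈ S.Rp, (S.kap α * α i) • dQuot α f x
        = ∑ α ∈ S.Rp, ∑ i, x i • (S.kap α * α i) • dQuot α f x := by
      rw [← Finset.sum_comm]
      exact Finset.sum_congr rfl fun i _ => Finset.smul_sum
    rw [hswap]
    refine Finset.sum_congr rfl fun α _ => ?_
    have h3 : ∀ i ∈ (Finset.univ : Finset (Fin d)), x i • (S.kap α * α i) • dQuot α f x
        = (x i * (S.kap α * α i)) • dQuot α f x := fun i _ => smul_smul _ _ _
    rw [Finset.sum_congr rfl h3, ← Finset.sum_smul]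
    have h4 : ∑ i, x i * (S.kap α * α i) = S.kap α * ⟪α,x⟫ := by
      rw [inner_eq_sum, Finset.mul_sum]
      exact Finset.sum_congr rfl fun i _ => by ring
    rw [h4, mul_smul, inner_smul_dQuot]

theorem anti {e : Fin d → A}
    (hrel : ∀ i j, e i * e j + e j * e i = if i = j then (-2:A) else 0)
    (S : DunklData d) (hS : ∀ α ∈ S.Rp, (⟪α,α⟫:ℝ) ≠ 0) (n : ℕ) {f : Vd d → A}
    (hf : ContDiff ℝ (⊤:ℕ∞) f) (heu : ∀ z, fderiv ℝ f z z = (n:ℝ) • f z) (x : Vd d) :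
    diracD e S (fun y => vecC e y * f y) x
      = -((2*(n:ℝ) + dunklDim S) • f x) - vecC e x * diracD e S f x := by
  have hejf : ∀ j, ContDiff ℝ (⊤:ℕ∞) (fun y => e j * f y) := fun j => contDiff_const.mul hf
  have hcoord : ∀ j : Fin d, ContDiff ℝ (⊤:ℕ∞) (fun y : Vd d => y j • (e j * f y)) :=
    fun j => (contDiff_proj j).smul (hejf j)
  have step1 : (fun y => vecC e y * f y) = (fun y : Vd d => ∑ j, y j • (e j * f y)) := by
    funext y
    unfold vecC
    rw [Finset.sum_mul]
    exact Finset.sum_congr rfl fun j _ => smul_mul_assoc _ _ _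
  rw [step1, diracD_sum e S Finset.univ _ (fun j _ => hcoord j) x]
  have hDj : ∀ j : Fin d, diracD e S (fun y => y j • (e j * f y)) x
      = ∑ i, (x j • (e i * (e j * dunklT S i f x))
          + ((EuclideanSpace.single i (1:ℝ) : Vd d) j) • (e i * (e j * f x))
          + ∑ α ∈ S.Rp, ((S.kap α * α i) * ((2 * α j) / ⟪α,α⟫)) • (e i * (e j * f (reflect α x)))) := by
    intro j
    unfold diracD
    refine Finset.sum_congr rfl fun i _ => ?_
    have hTconst : dunklT S i (fun y => e j * f y) x = e j * dunklT S i f x :=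
      dunklT_const_mul S i (e j) hf x
    rw [dunklT_coord_mul S hS i j (hejf j) x, hTconst, mul_add, mul_add,
      mul_smul_comm, mul_smul_comm, Finset.mul_sum]
    congr 1
    refine Finset.sum_congr rfl fun α _ => ?_
    rw [mul_smul_comm]
  rw [Finset.sum_congr rfl (fun j _ => hDj j)]
  have hsplit3 : ∀ j ∈ (Finset.univ : Finset (Fin d)),
      (∑ i, (x j • (e i * (e j * dunklT S i f x))
        + ((EuclideanSpace.single i (1:ℝ) : Vd d) j) • (e i * (e j * f x))
        + ∑ α ∈ S.Rp, ((S.kap α * α i) * ((2 * α j) / ⟪α,α⟫)) • (e i * (e j * f (reflect α x)))))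
      = (∑ i, x j • (e i * (e j * dunklT S i f x)))
        + (∑ i, ((EuclideanSpace.single i (1:ℝ) : Vd d) j) • (e i * (e j * f x)))
        + ∑ i, ∑ α ∈ S.Rp, ((S.kap α * α i) * ((2 * α j) / ⟪α,α⟫)) • (e i * (e j * f (reflect α x))) := by
    intro j _
    rw [Finset.sum_add_distrib, Finset.sum_add_distrib]
  rw [Finset.sum_congr rfl hsplit3, Finset.sum_add_distrib, Finset.sum_add_distrib]
  have hT2 : ∑ j, ∑ i, ((EuclideanSpace.single i (1:ℝ) : Vd d) j) • (e i * (e j * f x))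
      = -((d:ℝ) • f x) := by
    have hj : ∀ j ∈ (Finset.univ : Finset (Fin d)),
        ∑ i, ((EuclideanSpace.single i (1:ℝ) : Vd d) j) • (e i * (e j * f x))
          = e j * (e j * f x) := by
      intro j _
      rw [Finset.sum_eq_single j]
      · rw [EuclideanSpace.single_apply, if_pos rfl, one_smul]
      · intro i _ hij
        rw [EuclideanSpace.single_apply, if_neg (fun hc => hij hc.symm), zero_smul]
      · intro hj'; exact absurd (Finset.mem_univ j) hj'
    rw [Finset.sum_congr rfl hj]
    have hsq : ∀ j ∈ (Finset.univ : Finset (Fin d)), e j * (e j * f x) = -(f x) := by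
      intro j _
      rw [← mul_assoc, ei_sq hrel j, neg_one_mul]
    rw [Finset.sum_congr rfl hsq, Finset.sum_const, Finset.card_univ, Fintype.card_fin,
      ← Nat.cast_smul_eq_nsmul ℝ, smul_neg]
  have hT3 : ∑ j, ∑ i, ∑ α ∈ S.Rp, ((S.kap α * α i) * ((2 * α j) / ⟪α,α⟫)) • (e i * (e j * f (reflect α x)))
      = -∑ α ∈ S.Rp, (2 * S.kap α) • f (reflect α x) := by
    have h1 : ∀ j ∈ (Finset.univ : Finset (Fin d)),
        ∑ i, ∑ α ∈ S.Rp, ((S.kap α * α i) * ((2 * α j) / ⟪α,α⟫)) • (e i * (e j * f (reflect α x)))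
        = ∑ α ∈ S.Rp, ∑ i, ((S.kap α * α i) * ((2 * α j) / ⟪α,α⟫)) • (e i * (e j * f (reflect α x))) :=
      fun j _ => Finset.sum_comm
    rw [Finset.sum_congr rfl h1, Finset.sum_comm]
    have h2 : ∀ α ∈ S.Rp,
        ∑ j, ∑ i, ((S.kap α * α i) * ((2 * α j) / ⟪α,α⟫)) • (e i * (e j * f (reflect α x)))
        = -((2 * S.kap α) • f (reflect α x)) := by
      intro α hα
      have h3 : ∀ j i, ((S.kap α * α i) * ((2 * α j) / ⟪α,α⟫)) • (e i * (e j * f (reflect α x)))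
          = (2 * S.kap α / ⟪α,α⟫) • ((α i * α j) • (e i * (e j * f (reflect α x)))) := by
        intro j i
        rw [smul_smul]
        congr 1
        ring
      have h4 : ∑ j, ∑ i, ((S.kap α * α i) * ((2 * α j) / ⟪α,α⟫)) • (e i * (e j * f (reflect α x)))
          = (2 * S.kap α / ⟪α,α⟫) • ∑ i, ∑ j, (α i * α j) • (e i * (e j * f (reflect α x))) := by
        rw [Finset.sum_comm, Finset.smul_sum]
        refine Finset.sum_congr rfl fun i _ => ?_
        rw [Finset.smul_sum]
        exact Finset.sum_congr rfl fun j _ => h3 j i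
      rw [h4, ← vecC_mul_expand e α (f (reflect α x)), ← mul_assoc, vecC_sq hrel α, neg_mul,
        smul_one_mul', smul_neg, smul_smul, div_mul_cancel₀ _ (hS α hα)]
    rw [Finset.sum_congr rfl h2, Finset.sum_neg_distrib]
  have hT1 : ∑ j, ∑ i, x j • (e i * (e j * dunklT S i f x))
      = (-2:ℝ) • ((n:ℝ) • f x + ∑ α ∈ S.Rp, S.kap α • (f x - f (reflect α x)))
        - vecC e x * diracD e S f x := by
    have hkey : ∀ j i, e i * (e j * dunklT S i f x)
        = (if i = j then (-2:A) else 0) * dunklT S i f x - e j * (e i * dunklT S i f x) := by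
      intro j i
      have hsub : e i * e j = (if i = j then (-2:A) else 0) - e j * e i :=
        eq_sub_of_add_eq (hrel i j)
      calc e i * (e j * dunklT S i f x)
          = (e i * e j) * dunklT S i f x := (mul_assoc _ _ _).symm
        _ = ((if i = j then (-2:A) else 0) - e j * e i) * dunklT S i f x := by rw [hsub]
        _ = (if i = j then (-2:A) else 0) * dunklT S i f x
              - (e j * e i) * dunklT S i f x := sub_mul _ _ _
        _ = (if i = j then (-2:A) else 0) * dunklT S i f x
              - e j * (e i * dunklT S i f x) := by rw [mul_assoc]
    have hsplitd : ∀ j ∈ (Finset.univ : Finset (Fin d)),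
        ∑ i, x j • (e i * (e j * dunklT S i f x))
        = (∑ i, x j • ((if i = j then (-2:A) else 0) * dunklT S i f x))
          - ∑ i, x j • (e j * (e i * dunklT S i f x)) := by
      intro j _
      rw [← Finset.sum_sub_distrib]
      refine Finset.sum_congr rfl fun i _ => ?_
      rw [hkey j i, smul_sub]
    rw [Finset.sum_congr rfl hsplitd, Finset.sum_sub_distrib]
    congr 1
    · have hA : ∀ j ∈ (Finset.univ : Finset (Fin d)),
          ∑ i, x j • ((if i = j then (-2:A) else 0) * dunklT S i f x)
          = x j • ((-2:ℝ) • dunklT S j f x) := by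
        intro j _
        rw [Finset.sum_eq_single j]
        · rw [if_pos rfl]
          congr 1
          rw [neg_two_A, smul_one_mul']
        · intro i _ hij
          rw [if_neg hij, zero_mul, smul_zero]
        · intro h; exact absurd (Finset.mem_univ j) h
      rw [Finset.sum_congr rfl hA]
      have hpull : ∑ j, x j • ((-2:ℝ) • dunklT S j f x)
          = (-2:ℝ) • ∑ j, x j • dunklT S j f x := by
        rw [Finset.smul_sum]
        exact Finset.sum_congr rfl fun j _ => smul_comm _ _ _
      rw [hpull, euler_T S hf x, heu x]
    · have hB : ∀ j ∈ (Finset.univ : Finset (Fin d)),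
          ∑ i, x j • (e j * (e i * dunklT S i f x)) = x j • (e j * diracD e S f x) := by
        intro j _
        unfold diracD
        rw [Finset.mul_sum, Finset.smul_sum]
      rw [Finset.sum_congr rfl hB]
      unfold vecC
      rw [Finset.sum_mul]
      exact Finset.sum_congr rfl fun j _ => (smul_mul_assoc _ _ _).symm
  rw [hT1, hT2, hT3]
  have hcomb : (-2:ℝ) • (∑ α ∈ S.Rp, S.kap α • (f x - f (reflect α x)))
      - ∑ α ∈ S.Rp, (2 * S.kap α) • f (reflect α x) = -((2 * gam S) • f x) := by
    rw [Finset.smul_sum, ← Finset.sum_sub_distrib]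
    have hterm : ∀ α ∈ S.Rp, (-2:ℝ) • (S.kap α • (f x - f (reflect α x)))
        - (2 * S.kap α) • f (reflect α x) = -((2 * S.kap α) • f x) := by
      intro α _
      module
    rw [Finset.sum_congr rfl hterm, Finset.sum_neg_distrib, ← Finset.sum_smul]
    congr 2
    unfold gam
    rw [Finset.mul_sum]
  have hdim : dunklDim S = 2 * gam S + (d:ℝ) := rfl
  rw [hdim]
  linear_combination (norm := module) hcomb

end Anti
end AF
namespace AF
section Pow

variable {d : ℕ} {A : Type*} [NormedRing A] [NormedAlgebra ℝ A]

/-- coefficients in `D̲(x̲^j Q) = bb m j • x̲^(j-1) Q` for `Q` monogenic of degree `m`. -/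
def bb (S : DunklData d) (m j : ℕ) : ℝ :=
  if Even j then -(j:ℝ) else -(2*(m:ℝ) + dunklDim S + ((j:ℝ)-1))

lemma bb_succ (S : DunklData d) (m j : ℕ) :
    bb S m (j+1) = -(2*((m:ℕ):ℝ) + 2*((j:ℕ):ℝ) + dunklDim S) - bb S m j := by
  unfold bb
  by_cases h : Even j
  · rw [if_neg (by simp [Nat.even_add_one, h]), if_pos h]
    push_cast
    ring
  · rw [if_pos (Nat.even_add_one.mpr h), if_neg h]
    push_cast
    ring

lemma bb_ne_zero (S : DunklData d) (hμ : 0 < dunklDim S) (m j : ℕ) : bb S m (j+1) ≠ 0 := by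
  unfold bb
  split_ifs with h
  · refine neg_ne_zero.mpr (ne_of_gt ?_)
    push_cast
    positivity
  · refine neg_ne_zero.mpr (ne_of_gt ?_)
    have h1 : (0:ℝ) ≤ 2*((m:ℕ):ℝ) := by positivity
    have h2 : (0:ℝ) ≤ ((j:ℕ):ℝ) := Nat.cast_nonneg j
    have h3 : (((j+1:ℕ)):ℝ) - 1 = ((j:ℕ):ℝ) := by push_cast; ring
    rw [h3]
    linarith

lemma dQuot_const (a : Vd d) (b : A) (x : Vd d) : dQuot a (fun _ : Vd d => b) x = 0 := by
  unfold dQuot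
  split_ifs with h <;> simp

lemma diracD_const (e : Fin d → A) (S : DunklData d) (b : A) (x : Vd d) :
    diracD e S (fun _ : Vd d => b) x = 0 := by
  unfold diracD dunklT
  simp [dQuot_const]

lemma diracD_pow {e : Fin d → A}
    (hrel : ∀ i j, e i * e j + e j * e i = if i = j then (-2:A) else 0)
    (S : DunklData d) (hS : ∀ α ∈ S.Rp, (⟪α,α⟫:ℝ) ≠ 0)
    (m : ℕ) {Q : Vd d → A} (hQ : ContDiff ℝ (⊤:ℕ∞) Q)
    (hhomQ : ∀ (c:ℝ) (x : Vd d), Q (c•x) = c^m • Q x) (hmono : ∀ x, diracD e S Q x = 0) :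
    ∀ (j : ℕ) (x : Vd d), diracD e S (fun y => vecC e y ^ (j+1) * Q y) x
      = bb S m (j+1) • (vecC e x ^ j * Q x) := by
  have hpow_smooth : ∀ k : ℕ, ContDiff ℝ (⊤:ℕ∞) (fun y => vecC e y ^ k * Q y) :=
    fun k => ((vecC_contDiff e).pow k).mul hQ
  have hpow_homog : ∀ (k : ℕ) (c : ℝ) (x : Vd d),
      vecC e (c•x) ^ k * Q (c•x) = c^(m+k) • (vecC e x ^ k * Q x) := by
    intro k c x
    rw [vecC_smul, smul_pow, hhomQ, smul_mul_assoc, mul_smul_comm, smul_smul, ← pow_add]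
    congr 2
    omega
  have heul : ∀ (k : ℕ) (z : Vd d), fderiv ℝ (fun y => vecC e y ^ k * Q y) z z
      = (((m+k:ℕ)):ℝ) • (vecC e z ^ k * Q z) :=
    fun k z => euler (m+k) _ (hpow_smooth k) (fun c _ y => hpow_homog k c y) z
  intro j
  induction j with
  | zero =>
    intro x
    have h1 : (fun y => vecC e y ^ 1 * Q y) = fun y => vecC e y * Q y := by
      funext y; rw [pow_one]
    have heuQ : ∀ z, fderiv ℝ Q z z = (m:ℝ) • Q z :=
      euler m Q hQ (fun c _ y => hhomQ c y)
    rw [h1, anti hrel S hS m hQ heuQ x, hmono x, mul_zero, sub_zero, pow_zero, one_mul]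
    unfold bb
    rw [if_neg (by decide)]
    match_scalars
    push_cast
    ring
  | succ j ih =>
    intro x
    have h2 : (fun y => vecC e y ^ (j+1+1) * Q y)
        = fun y => vecC e y * (vecC e y ^ (j+1) * Q y) := by
      funext y
      rw [← mul_assoc, ← pow_succ']
    rw [h2, anti hrel S hS (m+(j+1)) (hpow_smooth (j+1)) (heul (j+1)) x, ih x,
      mul_smul_comm, ← mul_assoc, ← pow_succ', bb_succ S m (j+1)]
    match_scalars
    push_cast
    ring

end Pow
end AF
namespace AF
section Main

variable {d : ℕ} {A : Type*} [NormedRing A] [NormedAlgebra ℝ A]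

lemma zero_decomp {e : Fin d → A}
    (hrel : ∀ i j, e i * e j + e j * e i = if i = j then (-2:A) else 0)
    (S : DunklData d) (hS : ∀ α ∈ S.Rp, (⟪α,α⟫:ℝ) ≠ 0) (hμ : 0 < dunklDim S) :
    ∀ (n : ℕ) (Q : Fin (n+1) → Vd d → A),
      (∀ k : Fin (n+1), ContDiff ℝ (⊤:ℕ∞) (Q k)
        ∧ (∀ (c : ℝ) (x : Vd d), Q k (c • x) = (c ^ (n - (k:ℕ))) • Q k x)
        ∧ (∀ x, diracD e S (Q k) x = 0)) →
      (∀ x, ∑ k : Fin (n+1), vecC e x ^ (k:ℕ) * Q k x = 0) →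
      ∀ k x, Q k x = 0 := by
  intro n
  induction n with
  | zero =>
    intro Q hQ hsum k x
    have hl := k.isLt
    have hk : k = 0 := by
      apply Fin.ext
      simp only [Fin.val_zero]
      omega
    subst hk
    have h := hsum x
    rw [Fin.sum_univ_one] at h
    simpa using h
  | succ n ih =>
    intro Q hQ hsum
    have hQ0 : ∀ x, diracD e S (Q 0) x = 0 := (hQ 0).2.2
    have hsmooth : ∀ k : Fin (n+2), ContDiff ℝ (⊤:ℕ∞) (fun y => vecC e y ^ (k:ℕ) * Q k y) :=
      fun k => ((vecC_contDiff e).pow _).mul (hQ k).1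
    have hD : ∀ z, ∑ k : Fin (n+2), diracD e S (fun y => vecC e y ^ (k:ℕ) * Q k y) z = 0 := by
      intro z
      have hfun : (fun y => ∑ k : Fin (n+2), vecC e y ^ (k:ℕ) * Q k y) = fun _ => (0:A) :=
        funext hsum
      have h : diracD e S (fun y => ∑ k : Fin (n+2), vecC e y ^ (k:ℕ) * Q k y) z
          = ∑ k : Fin (n+2), diracD e S (fun y => vecC e y ^ (k:ℕ) * Q k y) z :=
        diracD_sum e S Finset.univ _ (fun k _ => hsmooth k) z
      rw [← h, hfun, diracD_zero]
    have hterm : ∀ (k : Fin (n+1)) z,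
        diracD e S (fun y => vecC e y ^ ((k.succ : Fin (n+2)):ℕ) * Q k.succ y) z
          = bb S (n - (k:ℕ)) ((k:ℕ)+1) • (vecC e z ^ (k:ℕ) * Q k.succ z) := by
      intro k z
      have hsv : ((k.succ : Fin (n+2)) : ℕ) = (k:ℕ)+1 := Fin.val_succ k
      have hdeg : (n+1) - ((k.succ : Fin (n+2)):ℕ) = n - (k:ℕ) := by rw [hsv]; omega
      have hhomk : ∀ (c : ℝ) (x : Vd d), Q k.succ (c • x) = c ^ (n - (k:ℕ)) • Q k.succ x := by
        intro c x
        rw [(hQ k.succ).2.1 c x, hdeg]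
      have h := diracD_pow hrel S hS (n - (k:ℕ)) (hQ k.succ).1 hhomk (hQ k.succ).2.2 (k:ℕ) z
      rw [hsv]
      exact h
    have hzero0 : ∀ z, diracD e S (fun y => vecC e y ^ (((0:Fin (n+2))):ℕ) * Q 0 y) z = 0 := by
      intro z
      have h0 : (fun y => vecC e y ^ (((0:Fin (n+2))):ℕ) * Q 0 y) = Q 0 := by
        funext y
        simp
      rw [h0]
      exact hQ0 z
    have hsum' : ∀ z, ∑ k : Fin (n+1),
        vecC e z ^ (k:ℕ) * (bb S (n - (k:ℕ)) ((k:ℕ)+1) • Q k.succ z) = 0 := by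
      intro z
      have h5 := hD z
      rw [Fin.sum_univ_succ, hzero0 z, zero_add,
        Finset.sum_congr rfl (fun k _ => hterm k z)] at h5
      rw [← h5]
      exact Finset.sum_congr rfl fun k _ => mul_smul_comm _ _ _
    have hprops : ∀ k : Fin (n+1),
        ContDiff ℝ (⊤:ℕ∞) (fun z => bb S (n - (k:ℕ)) ((k:ℕ)+1) • Q k.succ z)
        ∧ (∀ (c : ℝ) (x : Vd d), (fun z => bb S (n - (k:ℕ)) ((k:ℕ)+1) • Q k.succ z) (c • x)
            = (c ^ (n - (k:ℕ))) • (fun z => bb S (n - (k:ℕ)) ((k:ℕ)+1) • Q k.succ z) x)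
        ∧ (∀ x, diracD e S (fun z => bb S (n - (k:ℕ)) ((k:ℕ)+1) • Q k.succ z) x = 0) := by
      intro k
      have hsv : ((k.succ : Fin (n+2)) : ℕ) = (k:ℕ)+1 := Fin.val_succ k
      have hdeg : (n+1) - ((k.succ : Fin (n+2)):ℕ) = n - (k:ℕ) := by rw [hsv]; omega
      refine ⟨(hQ k.succ).1.const_smul _, fun c x => ?_, fun x => ?_⟩
      · simp only []
        rw [(hQ k.succ).2.1 c x, hdeg, smul_comm]
      · rw [diracD_const_smul e S _ (hQ k.succ).1 x, (hQ k.succ).2.2 x, smul_zero]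
    have hvanish := ih (fun k z => bb S (n - (k:ℕ)) ((k:ℕ)+1) • Q k.succ z) hprops hsum'
    have hsucc : ∀ (k : Fin (n+1)) x, Q k.succ x = 0 := by
      intro k x
      have h := hvanish k x
      rcases smul_eq_zero.mp h with h' | h'
      · exact absurd h' (bb_ne_zero S hμ _ _)
      · exact h'
    intro k x
    rcases Fin.eq_zero_or_eq_succ k with hk | ⟨j, hk⟩
    · subst hk
      have h := hsum x
      rw [Fin.sum_univ_succ] at h
      have hz : ∀ k : Fin (n+1), vecC e x ^ ((k.succ : Fin (n+2)):ℕ) * Q k.succ x = 0 := by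
        intro k
        rw [hsucc k x, mul_zero]
      rw [Finset.sum_congr rfl (fun k _ => hz k), Finset.sum_const, smul_zero, add_zero] at h
      simpa using h
    · subst hk
      exact hsucc j x

theorem exist {e : Fin d → A}
    (hrel : ∀ i j, e i * e j + e j * e i = if i = j then (-2:A) else 0)
    (S : DunklData d) (hS : ∀ α ∈ S.Rp, (⟪α,α⟫:ℝ) ≠ 0) (hμ : 0 < dunklDim S) :
    ∀ (n : ℕ) (P : Vd d → A), ContDiff ℝ (⊤:ℕ∞) P →
      (∀ (c : ℝ) (x : Vd d), P (c • x) = (c ^ n) • P x) →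
      ∃ Q : Fin (n + 1) → (Vd d → A),
        (∀ k : Fin (n + 1), ContDiff ℝ (⊤:ℕ∞) (Q k)
          ∧ (∀ (c : ℝ) (x : Vd d), Q k (c • x) = (c ^ (n - (k:ℕ))) • Q k x)
          ∧ (∀ x, diracD e S (Q k) x = 0))
        ∧ (∀ x, P x = ∑ k : Fin (n + 1), vecC e x ^ (k:ℕ) * Q k x) := by
  intro n
  induction n with
  | zero =>
    intro P hP hhom
    have hconst : P = fun _ => P 0 := by
      funext z
      have h0 := hhom 0 z
      rw [zero_smul, pow_zero, one_smul] at h0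
      exact h0.symm
    refine ⟨fun _ => P, fun k => ⟨hP, fun c x => ?_, fun x => ?_⟩, fun x => ?_⟩
    · rw [Nat.zero_sub, pow_zero, one_smul]
      have h := hhom c x
      rw [pow_zero, one_smul] at h
      exact h
    · rw [hconst]
      exact diracD_const e S (P 0) x
    · rw [Fin.sum_univ_one]
      simp
  | succ n ih =>
    intro P hP hhom
    obtain ⟨M, hM⟩ := rep (n+1) P hP (fun c _ y => hhom c y)
    have hPdiag : P = fun x => M (dg (n+1) x) := funext hM
    have hDsmooth : ContDiff ℝ (⊤:ℕ∞) (diracD e S P) := by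
      rw [hPdiag]
      exact diracD_diag_contDiff e S M
    have hDhomog : ∀ (c : ℝ) (x : Vd d), diracD e S P (c • x) = c ^ n • diracD e S P x := by
      intro c x
      rw [hPdiag]
      exact diracD_diag_homog e S M c x
    obtain ⟨q, hq, hqsum⟩ := ih (diracD e S P) hDsmooth hDhomog
    set R : Fin (n+1) → Vd d → A :=
      fun k x => (bb S (n - (k:ℕ)) ((k:ℕ)+1))⁻¹ • q k x with hRdef
    have hRsmooth : ∀ k, ContDiff ℝ (⊤:ℕ∞) (R k) := fun k => (hq k).1.const_smul _
    have hRhomog : ∀ (k : Fin (n+1)) (c : ℝ) (x : Vd d), R k (c • x) = c ^ (n - (k:ℕ)) • R k x := by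
      intro k c x
      simp only [hRdef]
      rw [(hq k).2.1 c x, smul_comm]
    have hRmono : ∀ (k : Fin (n+1)) x, diracD e S (R k) x = 0 := by
      intro k x
      simp only [hRdef]
      rw [diracD_const_smul e S _ (hq k).1 x, (hq k).2.2 x, smul_zero]
    have hDpow : ∀ (k : Fin (n+1)) x,
        diracD e S (fun y => vecC e y ^ ((k:ℕ)+1) * R k y) x
          = vecC e x ^ (k:ℕ) * q k x := by
      intro k x
      rw [diracD_pow hrel S hS (n - (k:ℕ)) (hRsmooth k) (hRhomog k) (hRmono k) (k:ℕ) x]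
      simp only [hRdef]
      rw [mul_smul_comm, smul_smul, mul_inv_cancel₀ (bb_ne_zero S hμ _ _), one_smul]
    set Q0 : Vd d → A := fun x => P x - ∑ k : Fin (n+1), vecC e x ^ ((k:ℕ)+1) * R k x with hQ0def
    have hterm_smooth : ∀ k : Fin (n+1), ContDiff ℝ (⊤:ℕ∞) (fun x => vecC e x ^ ((k:ℕ)+1) * R k x) :=
      fun k => ((vecC_contDiff e).pow _).mul (hRsmooth k)
    have hQ0smooth : ContDiff ℝ (⊤:ℕ∞) Q0 :=
      hP.sub (ContDiff.sum fun k _ => hterm_smooth k)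
    have hterm_homog : ∀ (k : Fin (n+1)) (c : ℝ) (x : Vd d),
        vecC e (c • x) ^ ((k:ℕ)+1) * R k (c • x)
          = c ^ (n+1) • (vecC e x ^ ((k:ℕ)+1) * R k x) := by
      intro k c x
      rw [vecC_smul, smul_pow, hRhomog k c x, smul_mul_assoc, mul_smul_comm, smul_smul, ← pow_add]
      congr 2
      have := k.isLt
      omega
    have hQ0homog : ∀ (c : ℝ) (x : Vd d), Q0 (c • x) = c ^ (n+1) • Q0 x := by
      intro c x
      simp only [hQ0def]
      rw [hhom c x, smul_sub, Finset.smul_sum]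
      congr 1
      exact Finset.sum_congr rfl fun k _ => hterm_homog k c x
    have hQ0mono : ∀ x, diracD e S Q0 x = 0 := by
      intro x
      have hsub : diracD e S Q0 x = diracD e S P x
          - diracD e S (fun z => ∑ k : Fin (n+1), vecC e z ^ ((k:ℕ)+1) * R k z) x :=
        diracD_sub e S hP (ContDiff.sum fun (k : Fin (n+1)) _ => hterm_smooth k) x
      have hsum2 : diracD e S (fun z => ∑ k : Fin (n+1), vecC e z ^ ((k:ℕ)+1) * R k z) x
          = ∑ k : Fin (n+1), diracD e S (fun z => vecC e z ^ ((k:ℕ)+1) * R k z) x :=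
        diracD_sum e S Finset.univ _ (fun k _ => hterm_smooth k) x
      rw [hsub, hsum2, Finset.sum_congr rfl (fun k _ => hDpow k x), ← hqsum x, sub_self]
    refine ⟨Fin.cases Q0 R, fun k => ?_, fun x => ?_⟩
    · refine Fin.cases ?_ ?_ k
      · refine ⟨hQ0smooth, fun c x => ?_, fun x => ?_⟩
        · simp only [Fin.cases_zero]
          rw [hQ0homog c x]
          norm_num
        · simp only [Fin.cases_zero]
          exact hQ0mono x
      · intro j
        refine ⟨?_, fun c x => ?_, fun x => ?_⟩
        · simp only [Fin.cases_succ]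
          exact hRsmooth j
        · simp only [Fin.cases_succ]
          rw [hRhomog j c x]
          congr 2
          rw [Fin.val_succ]
          omega
        · simp only [Fin.cases_succ]
          exact hRmono j x
    · rw [Fin.sum_univ_succ]
      simp only [Fin.cases_zero, Fin.cases_succ, Fin.val_zero, pow_zero, one_mul, Fin.val_succ]
      simp only [hQ0def]
      abel

end Main
end AF
/-- Theorem 4.2 (Almasi–Fischer decomposition): every `ℝ_{0,d}`-valued homogeneous
polynomial `P` of degree `n` on `ℝ^d` (encoded as a smooth function that is homogeneous of
degree `n`) decomposes uniquely as `P = Σ_{k=0}^n x̲^k Q_k` with each `Q_k` a homogeneous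
Dunkl-monogenic polynomial of degree `n − k`. -/
theorem almasi_fischer_decomposition (d : ℕ) (A : Type*) [NormedRing A] [NormedAlgebra ℝ A]
    (e : Fin d → A) (he : CliffordRel e) (S : DunklData d) (hγ : 0 < gam S)
    (n : ℕ) (P : Vd d → A) (hP : ContDiff ℝ (⊤ : ℕ∞) P)
    (hhom : ∀ (c : ℝ) (x : Vd d), P (c • x) = (c ^ n) • P x) :
    ∃! Q : Fin (n + 1) → (Vd d → A),
      (∀ k : Fin (n + 1), ContDiff ℝ (⊤ : ℕ∞) (Q k)
        ∧ (∀ (c : ℝ) (x : Vd d), Q k (c • x) = (c ^ (n - (k : ℕ))) • Q k x)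
        ∧ (∀ x : Vd d, diracD e S (Q k) x = 0))
      ∧ (∀ x : Vd d, P x = ∑ k : Fin (n + 1), vecC e x ^ (k : ℕ) * Q k x) := by
  classical
  obtain ⟨hrel, _⟩ := he
  have hS : ∀ α ∈ S.Rp, (⟪α,α⟫:ℝ) ≠ 0 := by
    intro α hα
    have hmem := S.Rp_subset hα
    have hne : α ≠ 0 := fun hc => S.zero_not_mem (hc ▸ hmem)
    exact fun hc => hne (inner_self_eq_zero.mp hc)
  have hμ : 0 < dunklDim S := by
    unfold dunklDim
    have hd : (0:ℝ) ≤ (d:ℝ) := Nat.cast_nonneg d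
    linarith
  obtain ⟨Q, hQprops, hQsum⟩ := AF.exist hrel S hS hμ n P hP hhom
  refine ⟨Q, ⟨hQprops, hQsum⟩, ?_⟩
  rintro Q' ⟨hQ'props, hQ'sum⟩
  have hdprops : ∀ k : Fin (n+1), ContDiff ℝ (⊤:ℕ∞) (fun x => Q' k x - Q k x)
      ∧ (∀ (c : ℝ) (x : Vd d), (fun x => Q' k x - Q k x) (c • x)
          = (c ^ (n - (k:ℕ))) • (fun x => Q' k x - Q k x) x)
      ∧ (∀ x, diracD e S (fun x => Q' k x - Q k x) x = 0) := by
    intro k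
    refine ⟨(hQ'props k).1.sub (hQprops k).1, fun c x => ?_, fun x => ?_⟩
    · simp only []
      rw [(hQ'props k).2.1 c x, (hQprops k).2.1 c x, smul_sub]
    · have hsub : diracD e S (fun x => Q' k x - Q k x) x
          = diracD e S (Q' k) x - diracD e S (Q k) x :=
        AF.diracD_sub e S (hQ'props k).1 (hQprops k).1 x
      rw [hsub, (hQ'props k).2.2 x, (hQprops k).2.2 x, sub_zero]
  have hdsum : ∀ x, ∑ k : Fin (n+1), vecC e x ^ (k:ℕ) * (Q' k x - Q k x) = 0 := by
    intro x
    have hsplit : ∑ k : Fin (n+1), vecC e x ^ (k:ℕ) * (Q' k x - Q k x)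
        = (∑ k : Fin (n+1), vecC e x ^ (k:ℕ) * Q' k x)
          - ∑ k : Fin (n+1), vecC e x ^ (k:ℕ) * Q k x := by
      rw [← Finset.sum_sub_distrib]
      exact Finset.sum_congr rfl fun k _ => mul_sub _ _ _
    rw [hsplit, ← hQ'sum x, ← hQsum x, sub_self]
  have hz := AF.zero_decomp hrel S hS hμ n (fun k x => Q' k x - Q k x) hdprops hdsum
  funext k x
  exact sub_eq_zero.mp (hz k x)
end
end

section
/- Let k, n ∈ ℕ with k ≤ n, and let P_{n−k} be a homogeneous Dunkl-monogenic polynomial of degree n−k on ℝ^d. Then the CK-extension of x̲^k P_{n−k}(x̲), namely CK[x̲^k P_{n−k}](x) = Σ_{j=0}^n ((−x₀)^j / j!) D̲^j( x̲^k P_{n−k}(x̲) ), has the form ( Σ_{j=0}^k c_j x₀^j x̲^{k−j} ) P_{n−k}(x̲) for some real constants c₀,…,c_k with c₀ = 1; equivalently it can be written as ( U(x₀,|x̲|) + (x̲/|x̲|) V(x₀,|x̲|) ) P_{n−k}(x̲), where U and V are real-valued homogeneous polynomials of degree k in the variables x₀ and r = |x̲|. -/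
open scoped BigOperators RealInnerProductSpace

noncomputable section

variable {d : ℕ} {A : Type*} [NormedRing A] [NormedAlgebra ℝ A]

/-- The Dunkl difference quotient on `ℝ^{d+1} = ℝ × ℝ^d` (the reflection group acts on the
`x̲`-part only, leaving the `x₀`-axis invariant). -/
def dQuot' (a : Vd d) (F : ℝ × Vd d → A) (x : ℝ × Vd d) : A :=
  if ⟪a, x.2⟫ = 0 then (2 / ⟪a, a⟫) • fderiv ℝ F x (0, a)
  else (⟪a, x.2⟫)⁻¹ • (F x - F (x.1, reflect a x.2))

/-- The Dunkl operator `T_{x_i}`, `i = 1, …, d`, acting on functions on `ℝ^{d+1}`. -/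
def dunklT' (S : DunklData d) (i : Fin d) (F : ℝ × Vd d → A) (x : ℝ × Vd d) : A :=
  fderiv ℝ F x (0, EuclideanSpace.single i 1) + ∑ a ∈ S.Rp, (S.kap a * a i) • dQuot' a F x

/-- The partial derivative `T_{x₀} = ∂_{x₀}` on `ℝ^{d+1}`. -/
def pd0 (F : ℝ × Vd d → A) (x : ℝ × Vd d) : A := fderiv ℝ F x (1, 0)

/-- The Dunkl Laplacian `Δ = ∂_{x₀}² + Σ_{i=1}^d T_{x_i}²` on `ℝ^{d+1}`. -/
def dunklLap (S : DunklData d) (F : ℝ × Vd d → A) : ℝ × Vd d → A :=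
  fun x => pd0 (pd0 F) x + ∑ i, dunklT' S i (dunklT' S i F) x

/-- The Dunkl–Cauchy–Riemann operator `D = ∂_{x₀} + D̲` on `ℝ^{d+1}`. -/
def dunklCR (e : Fin d → A) (S : DunklData d) (F : ℝ × Vd d → A) (x : ℝ × Vd d) : A :=
  pd0 F x + ∑ i, e i * dunklT' S i F x


section AuxCK

variable {d : ℕ} {A : Type*} [NormedRing A] [NormedAlgebra ℝ A]

/-- `vecC e` as a continuous linear map. -/
def vecCL (e : Fin d → A) : Vd d →L[ℝ] A :=
  ∑ i, (EuclideanSpace.proj i : Vd d →L[ℝ] ℝ).smulRight (e i)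

lemma vecCL_apply (e : Fin d → A) (x : Vd d) : vecCL e x = vecC e x := by
  simp [vecCL, vecC, ContinuousLinearMap.sum_apply]

lemma vecC_smul (e : Fin d → A) (c : ℝ) (x : Vd d) : vecC e (c • x) = c • vecC e x := by
  rw [← vecCL_apply, ← vecCL_apply, map_smul]

lemma vecC_sub (e : Fin d → A) (x y : Vd d) : vecC e (x - y) = vecC e x - vecC e y := by
  rw [← vecCL_apply, ← vecCL_apply, ← vecCL_apply, map_sub]

lemma vecC_single (e : Fin d → A) (i : Fin d) :
    vecC e (EuclideanSpace.single i (1:ℝ)) = e i := by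
  simp [vecC, EuclideanSpace.single_apply]

lemma contDiff_vecC (e : Fin d → A) : ContDiff ℝ (⊤:ℕ∞) (vecC e) := by
  have h : vecC e = fun x => vecCL e x := funext fun x => (vecCL_apply e x).symm
  rw [h]
  exact (vecCL e).contDiff

lemma neg_two_smul_one : ((-2 : ℝ) • (1:A)) = (-2 : A) := by
  rw [neg_smul, show (2:ℝ) = (1:ℝ)+1 by norm_num, add_smul, one_smul, one_add_one_eq_two]

lemma clifford_pair (e : Fin d → A)
    (he : ∀ i j, e i * e j + e j * e i = if i = j then (-2 : A) else 0)
    (a b : Vd d) :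
    vecC e a * vecC e b + vecC e b * vecC e a = (-2 * ⟪a, b⟫) • (1 : A) := by
  show (∑ i, a i • e i) * (∑ i, b i • e i) + (∑ i, b i • e i) * (∑ i, a i • e i) = _
  have key : ∀ (u v : Vd d), (∑ i, u i • e i) * (∑ i, v i • e i)
      = ∑ i, ∑ j, (u i * v j) • (e i * e j) := by
    intro u v
    rw [Finset.sum_mul_sum]
    exact Finset.sum_congr rfl fun i _ => Finset.sum_congr rfl fun j _ => by
      rw [smul_mul_assoc, mul_smul_comm, smul_smul]
  rw [key a b, key b a, Finset.sum_comm (s := Finset.univ) (t := Finset.univ),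
    ← Finset.sum_add_distrib]
  have step : ∀ j : Fin d,
      (∑ i, (a i * b j) • (e i * e j)) + (∑ i, (b j * a i) • (e j * e i))
        = (a j * b j) • (-2 : A) := by
    intro j
    rw [← Finset.sum_add_distrib]
    have h1 : ∀ i : Fin d, (a i * b j) • (e i * e j) + (b j * a i) • (e j * e i)
        = (a i * b j) • (if i = j then (-2:A) else 0) := by
      intro i
      rw [← he i j, smul_add, mul_comm (b j) (a i)]
    simp only [h1, smul_ite, smul_zero, Finset.sum_ite_eq', Finset.mem_univ, if_true]
  simp only [step]
  have h2 : ∀ j : Fin d, (a j * b j) • (-2:A) = ((a j * b j) * (-2:ℝ)) • (1:A) := by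
    intro j; rw [← neg_two_smul_one, smul_smul]
  simp only [h2]
  rw [← Finset.sum_smul]
  congr 1
  rw [← Finset.sum_mul]
  simp [PiLp.inner_apply, RCLike.inner_apply]
  rw [Finset.sum_congr rfl fun i _ => mul_comm (a.ofLp i) (b.ofLp i)]
  ring

/-- anticommutation, in the convenient multiplied-by-`u` form. -/
lemma clifford_anticomm (e : Fin d → A)
    (he : ∀ i j, e i * e j + e j * e i = if i = j then (-2 : A) else 0)
    (a b : Vd d) (u : A) :
    vecC e a * (vecC e b * u) = (-2 * ⟪a, b⟫) • u - vecC e b * (vecC e a * u) := by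
  have h := clifford_pair e he a b
  have h2 : vecC e a * vecC e b = (-2 * ⟪a, b⟫) • (1:A) - vecC e b * vecC e a :=
    eq_sub_of_add_eq h
  rw [← mul_assoc, h2, sub_mul, smul_mul_assoc, one_mul, mul_assoc]

lemma clifford_sq_mul (e : Fin d → A)
    (he : ∀ i j, e i * e j + e j * e i = if i = j then (-2 : A) else 0)
    (a : Vd d) (u : A) :
    vecC e a * (vecC e a * u) = (-⟪a, a⟫ : ℝ) • u := by
  have h := clifford_anticomm e he a a u
  have h2 : (2:ℝ) • (vecC e a * (vecC e a * u)) = (2 * (-⟪a,a⟫)) • u := by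
    rw [two_smul]
    nth_rewrite 1 [h]
    rw [sub_add_cancel]
    congr 1
    ring
  have := congrArg (fun z => (2:ℝ)⁻¹ • z) h2
  simpa [smul_smul] using this

lemma vecC_sq (e : Fin d → A)
    (he : ∀ i j, e i * e j + e j * e i = if i = j then (-2 : A) else 0)
    (x : Vd d) :
    vecC e x * vecC e x = (-(‖x‖^2) : ℝ) • (1:A) := by
  have := clifford_sq_mul e he x (1:A)
  rw [mul_one] at this
  rw [this, real_inner_self_eq_norm_sq]

lemma e_sq (e : Fin d → A)
    (he : ∀ i j, e i * e j + e j * e i = if i = j then (-2 : A) else 0)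
    (i : Fin d) (u : A) : e i * (e i * u) = -u := by
  have := clifford_sq_mul e he (EuclideanSpace.single i (1:ℝ)) u
  rw [vecC_single] at this
  rw [this]
  have : ⟪(EuclideanSpace.single i (1:ℝ)), (EuclideanSpace.single i (1:ℝ))⟫ = (1:ℝ) := by
    rw [EuclideanSpace.inner_single_left]; simp [EuclideanSpace.single_apply]
  rw [this]
  simp

lemma e_anticomm (e : Fin d → A)
    (he : ∀ i j, e i * e j + e j * e i = if i = j then (-2 : A) else 0)
    (i : Fin d) (b : Vd d) (u : A) :
    e i * (vecC e b * u) = (-2 * b i : ℝ) • u - vecC e b * (e i * u) := by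
  have h := clifford_anticomm e he (EuclideanSpace.single i (1:ℝ)) b u
  rw [vecC_single] at h
  have h2 : ⟪(EuclideanSpace.single i (1:ℝ)), b⟫ = b i := by
    rw [EuclideanSpace.inner_single_left]; simp
  rw [h2] at h
  exact h

/-- decomposition of a vector in terms of the standard basis. -/
lemma sum_single_eq (x : Vd d) : ∑ i, x i • EuclideanSpace.single i (1:ℝ) = x := by
  ext j
  have h := map_sum (PiLp.proj (𝕜 := ℝ) 2 (fun _ : Fin d => ℝ) j)
      (fun i => x i • EuclideanSpace.single i (1:ℝ)) Finset.univ
  simp only [PiLp.proj_apply, map_smul] at h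
  rw [h]
  simp [EuclideanSpace.single_apply]

/-- the building-block functions `x̲^m P(x)`. -/
def fMon (e : Fin d → A) (P : Vd d → A) (m : ℕ) : Vd d → A := fun y => vecC e y ^ m * P y

lemma contDiff_fMon (e : Fin d → A) {P : Vd d → A} (hP : ContDiff ℝ (⊤:ℕ∞) P) (m : ℕ) :
    ContDiff ℝ (⊤:ℕ∞) (fMon e P m) :=
  ((contDiff_vecC e).pow m).mul hP

lemma fMon_succ (e : Fin d → A) (P : Vd d → A) (m : ℕ) (y : Vd d) :
    fMon e P (m+1) y = vecC e y * fMon e P m y := by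
  rw [fMon, fMon, pow_succ', mul_assoc]

lemma fMon_zero (e : Fin d → A) (P : Vd d → A) : fMon e P 0 = P :=
  funext fun y => by rw [fMon, pow_zero, one_mul]

lemma fMon_hom (e : Fin d → A) {P : Vd d → A} (N : ℕ)
    (hhom : ∀ (c : ℝ) (y : Vd d), P (c • y) = c ^ N • P y) (m : ℕ)
    (c : ℝ) (y : Vd d) : fMon e P m (c • y) = c ^ (m + N) • fMon e P m y := by
  rw [fMon, fMon, vecC_smul, smul_pow, hhom, pow_add, smul_mul_assoc, mul_smul_comm, smul_smul]

lemma euler_id {f : Vd d → A} (hf : Differentiable ℝ f) (N : ℕ)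
    (hhom : ∀ (c : ℝ) (y : Vd d), f (c • y) = c ^ N • f y) (x : Vd d) :
    fderiv ℝ f x x = (N : ℝ) • f x := by
  have hline : HasDerivAt (fun c : ℝ => c • x) x 1 := by
    simpa using (hasDerivAt_id (1:ℝ)).smul_const x
  have hf1 : HasFDerivAt f (fderiv ℝ f x) ((1:ℝ) • x) := by
    rw [one_smul]; exact (hf x).hasFDerivAt
  have h1 : HasDerivAt (fun c : ℝ => f (c • x)) (fderiv ℝ f x x) 1 :=
    hf1.comp_hasDerivAt 1 hline
  have h2 : HasDerivAt (fun c : ℝ => f (c • x)) ((N:ℝ) • f x) 1 := by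
    have heq : (fun c : ℝ => f (c • x)) = fun c : ℝ => c ^ N • f x := funext fun c => hhom c x
    rw [heq]
    simpa using (hasDerivAt_pow N (1:ℝ)).smul_const (f x)
  exact h1.unique h2

lemma fderiv_vecC_mul (e : Fin d → A) {h : Vd d → A} {x : Vd d}
    (hh : DifferentiableAt ℝ h x) (v : Vd d) :
    fderiv ℝ (fun y => vecC e y * h y) x v
      = vecC e x * fderiv ℝ h x v + vecC e v * h x := by
  have h1 : (fun y => vecC e y * h y) = fun y => vecCL e y * h y := by
    funext y; rw [vecCL_apply]
  rw [h1]
  have h2 := ((vecCL e).hasFDerivAt (x := x)).mul' hh.hasFDerivAt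
  rw [show (fun y => vecCL e y * h y) = ⇑(vecCL e) * h from rfl, h2.fderiv]
  simp [vecCL_apply]

/-- The key difference-quotient computation. -/
lemma key_dquot (e : Fin d → A)
    (he : ∀ i j, e i * e j + e j * e i = if i = j then (-2 : A) else 0)
    {a : Vd d} (ha : a ≠ 0) {h : Vd d → A} (hh : Differentiable ℝ h) (x : Vd d) :
    vecC e a * dQuot a (fun y => vecC e y * h y) x
      = -(vecC e x * (vecC e a * dQuot a h x)) - (2:ℝ) • h x := by
  have haa : ⟪a,a⟫ ≠ 0 := inner_self_ne_zero.mpr ha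
  rw [dQuot, dQuot]
  split_ifs with hax
  · rw [fderiv_vecC_mul e (hh.differentiableAt) a]
    simp only [mul_smul_comm, mul_add, clifford_anticomm e he a x, clifford_sq_mul e he a, hax]
    set t1 : ℝ := ⟪a,a⟫ with ht1
    set t2 : ℝ := ⟪a,x⟫ with ht2
    match_scalars <;> field_simp <;> simp
  · have hrefl : vecC e (reflect a x) = vecC e x - (2 * ⟪a,x⟫ / ⟪a,a⟫) • vecC e a := by
      rw [reflect, vecC_sub, vecC_smul]
    simp only [hrefl]
    simp only [mul_sub, sub_mul, mul_add, add_mul, mul_smul_comm, smul_mul_assoc,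
      clifford_anticomm e he a x, clifford_sq_mul e he a, smul_sub, smul_add, smul_smul]
    set t1 : ℝ := ⟪a,a⟫ with ht1
    set t2 : ℝ := ⟪a,x⟫ with ht2
    match_scalars <;> field_simp <;> ring

lemma diracD_eq (e : Fin d → A) (S : DunklData d) (F : Vd d → A) (x : Vd d) :
    diracD e S F x = (∑ i, e i * fderiv ℝ F x (EuclideanSpace.single i 1))
      + ∑ a ∈ S.Rp, S.kap a • (vecC e a * dQuot a F x) := by
  rw [diracD]
  simp only [dunklT, mul_add, Finset.mul_sum]
  rw [Finset.sum_add_distrib]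
  congr 1
  rw [Finset.sum_comm]
  refine Finset.sum_congr rfl fun a _ => ?_
  rw [vecC, Finset.sum_mul, Finset.smul_sum]
  refine Finset.sum_congr rfl fun i _ => ?_
  rw [mul_smul_comm, smul_mul_assoc, smul_smul]

lemma dQuot_smul (a : Vd d) (c : ℝ) {F : Vd d → A} (hF : Differentiable ℝ F) (x : Vd d) :
    dQuot a (fun y => c • F y) x = c • dQuot a F x := by
  rw [dQuot, dQuot]
  split_ifs with hax
  · rw [fderiv_fun_const_smul (hF x) c, ContinuousLinearMap.smul_apply, smul_comm]
  · rw [← smul_sub, smul_comm]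

lemma dQuot_zero (a : Vd d) (x : Vd d) : dQuot a (fun _ => (0:A)) x = 0 := by
  rw [dQuot]
  split_ifs with hax
  · have : (fun _ : Vd d => (0:A)) = fun _ => (0:A) := rfl
    rw [show fderiv ℝ (fun _ : Vd d => (0:A)) x = 0 from fderiv_const_apply 0]
    simp
  · simp

lemma diracD_smul (e : Fin d → A) (S : DunklData d) (c : ℝ) {F : Vd d → A}
    (hF : Differentiable ℝ F) (x : Vd d) :
    diracD e S (fun y => c • F y) x = c • diracD e S F x := by
  rw [diracD_eq, diracD_eq, smul_add]
  congr 1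
  · rw [Finset.smul_sum]
    refine Finset.sum_congr rfl fun i _ => ?_
    rw [fderiv_fun_const_smul (hF x) c, ContinuousLinearMap.smul_apply, mul_smul_comm]
  · rw [Finset.smul_sum]
    refine Finset.sum_congr rfl fun a _ => ?_
    rw [dQuot_smul a c hF x, mul_smul_comm, smul_comm]

lemma diracD_zero (e : Fin d → A) (S : DunklData d) (x : Vd d) :
    diracD e S (fun _ => (0:A)) x = 0 := by
  rw [diracD_eq]
  simp [dQuot_zero, fderiv_const_apply]

lemma fderiv_eval_self {f : Vd d → A} (x : Vd d) :
    ∑ i, x i • fderiv ℝ f x (EuclideanSpace.single i 1) = fderiv ℝ f x x := by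
  have h1 : ∀ i : Fin d, x i • fderiv ℝ f x (EuclideanSpace.single i 1)
      = fderiv ℝ f x (x i • EuclideanSpace.single i 1) := fun i => (map_smul _ _ _).symm
  simp only [h1]
  rw [← map_sum (fderiv ℝ f x) (fun i => x i • EuclideanSpace.single i (1:ℝ)) Finset.univ,
    sum_single_eq]

lemma diracD_step (e : Fin d → A)
    (he : ∀ i j, e i * e j + e j * e i = if i = j then (-2:A) else 0)
    (S : DunklData d) {P : Vd d → A} (hP : ContDiff ℝ (⊤:ℕ∞) P) (N : ℕ)
    (hhom : ∀ (c : ℝ) (y : Vd d), P (c • y) = c ^ N • P y) (m : ℕ) (x : Vd d) :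
    diracD e S (fMon e P (m+1)) x
      = (-(dunklDim S) - 2*((m:ℝ) + (N:ℝ))) • fMon e P m x
        - vecC e x * diracD e S (fMon e P m) x := by
  have hdiff : Differentiable ℝ (fMon e P m) := (contDiff_fMon e hP m).differentiable (by simp)
  have hfeq : fMon e P (m+1) = fun y => vecC e y * fMon e P m y := funext (fMon_succ e P m)
  have hroot : ∀ a ∈ S.Rp, a ≠ (0 : Vd d) := by
    intro a haRp h0
    exact S.zero_not_mem (h0 ▸ S.Rp_subset haRp)
  rw [hfeq, diracD_eq, diracD_eq]
  have h1 : (∑ i, e i * fderiv ℝ (fun y => vecC e y * fMon e P m y) x (EuclideanSpace.single i 1))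
      = ((-(d:ℝ)) - 2*((m:ℝ)+(N:ℝ))) • fMon e P m x
        - vecC e x * ∑ i, e i * fderiv ℝ (fMon e P m) x (EuclideanSpace.single i 1) := by
    have hterm : ∀ i : Fin d,
        e i * fderiv ℝ (fun y => vecC e y * fMon e P m y) x (EuclideanSpace.single i 1)
          = (((-2 : ℝ) * x i) • fderiv ℝ (fMon e P m) x (EuclideanSpace.single i 1)
              - vecC e x * (e i * fderiv ℝ (fMon e P m) x (EuclideanSpace.single i 1)))
            + -(fMon e P m x) := by
      intro i
      rw [fderiv_vecC_mul e (hdiff x) _, mul_add, vecC_single,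
        e_anticomm e he i x, e_sq e he i]
    rw [Finset.sum_congr rfl (fun i _ => hterm i), Finset.sum_add_distrib,
      Finset.sum_sub_distrib]
    have hA : ∑ i, ((-2 : ℝ) * x i) • fderiv ℝ (fMon e P m) x (EuclideanSpace.single i 1)
        = ((-2 : ℝ) * ((m:ℝ)+(N:ℝ))) • fMon e P m x := by
      have hs : ∀ i : Fin d, ((-2:ℝ) * x i) • fderiv ℝ (fMon e P m) x (EuclideanSpace.single i 1)
          = (-2:ℝ) • (x i • fderiv ℝ (fMon e P m) x (EuclideanSpace.single i 1)) := by
        intro i; rw [smul_smul]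
      rw [Finset.sum_congr rfl (fun i _ => hs i), ← Finset.smul_sum, fderiv_eval_self,
        euler_id hdiff (m+N) (fMon_hom e N hhom m) x, smul_smul]
      congr 1
      push_cast
      ring
    have hB : ∑ _i : Fin d, -(fMon e P m x) = -((d:ℝ) • fMon e P m x) := by
      rw [Finset.sum_const, Finset.card_univ, Fintype.card_fin, ← Nat.cast_smul_eq_nsmul ℝ,
        smul_neg]
    rw [hA, hB, ← Finset.mul_sum]
    match_scalars <;> ring
  have h2 : ∑ a ∈ S.Rp, S.kap a • (vecC e a * dQuot a (fun y => vecC e y * fMon e P m y) x)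
      = -(vecC e x * ∑ a ∈ S.Rp, S.kap a • (vecC e a * dQuot a (fMon e P m) x))
        - (2 * gam S) • fMon e P m x := by
    have hterm : ∀ a ∈ S.Rp,
        S.kap a • (vecC e a * dQuot a (fun y => vecC e y * fMon e P m y) x)
          = -(S.kap a • (vecC e x * (vecC e a * dQuot a (fMon e P m) x)))
            - (S.kap a * 2) • fMon e P m x := by
      intro a haRp
      rw [key_dquot e he (hroot a haRp) hdiff x, smul_sub, smul_neg, smul_smul]
    rw [Finset.sum_congr rfl hterm, Finset.sum_sub_distrib]
    congr 1
    · have : ∀ a ∈ S.Rp, S.kap a • (vecC e x * (vecC e a * dQuot a (fMon e P m) x))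
          = vecC e x * (S.kap a • (vecC e a * dQuot a (fMon e P m) x)) := by
        intro a _; rw [mul_smul_comm]
      rw [Finset.sum_neg_distrib, Finset.sum_congr rfl this, ← Finset.mul_sum]
    · rw [← Finset.sum_smul, ← Finset.sum_mul, gam, mul_comm]
  rw [h1, h2, mul_add (vecC e x), dunklDim]
  match_scalars <;> ring

/-- coefficients of the recursion `D̄(x̲^m P) = c_m x̲^{m-1} P`. -/
def ckC (μ : ℝ) (N : ℕ) : ℕ → ℝ
  | 0 => 0
  | (m+1) => -(μ + 2*((m:ℝ) + (N:ℝ))) - ckC μ N m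

lemma diracD_fMon (e : Fin d → A)
    (he : ∀ i j, e i * e j + e j * e i = if i = j then (-2:A) else 0)
    (S : DunklData d) {P : Vd d → A} (hP : ContDiff ℝ (⊤:ℕ∞) P) (N : ℕ)
    (hhom : ∀ (c : ℝ) (y : Vd d), P (c • y) = c ^ N • P y)
    (hmono : ∀ x : Vd d, diracD e S P x = 0) (m : ℕ) (x : Vd d) :
    diracD e S (fMon e P m) x = ckC (dunklDim S) N m • fMon e P (m-1) x := by
  induction m generalizing x with
  | zero =>
    have h0 : (0:ℕ) - 1 = 0 := rfl
    rw [h0, fMon_zero e P, hmono x]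
    simp [ckC]
  | succ m ih =>
    rw [diracD_step e he S hP N hhom m x, ih x]
    have hx : vecC e x * (ckC (dunklDim S) N m • fMon e P (m-1) x)
        = ckC (dunklDim S) N m • fMon e P m x := by
      cases m with
      | zero => simp [ckC]
      | succ j =>
        rw [mul_smul_comm]
        congr 1
        simp only [Nat.add_sub_cancel]
        exact (fMon_succ e P j x).symm
    rw [hx]
    simp only [ckC, Nat.add_sub_cancel]
    match_scalars <;> ring

/-- cumulative coefficients. -/
def ckG (μ : ℝ) (N k : ℕ) : ℕ → ℝ
  | 0 => 1
  | (j+1) => ckG μ N k j * ckC μ N (k - j)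

lemma iterate_fMon (e : Fin d → A)
    (he : ∀ i j, e i * e j + e j * e i = if i = j then (-2:A) else 0)
    (S : DunklData d) {P : Vd d → A} (hP : ContDiff ℝ (⊤:ℕ∞) P) (N : ℕ)
    (hhom : ∀ (c : ℝ) (y : Vd d), P (c • y) = c ^ N • P y)
    (hmono : ∀ x : Vd d, diracD e S P x = 0) (k : ℕ) :
    ∀ j, j ≤ k → (diracD e S)^[j] (fMon e P k)
      = fun x => ckG (dunklDim S) N k j • fMon e P (k - j) x := by
  intro j
  induction j with
  | zero =>
    intro _
    funext x
    simp [ckG]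
  | succ j ih =>
    intro hjk
    rw [Function.iterate_succ_apply', ih (by omega)]
    funext x
    rw [diracD_smul e S (ckG (dunklDim S) N k j)
        (F := fMon e P (k-j))
        ((contDiff_fMon e hP (k-j)).differentiable (by simp)) x,
      diracD_fMon e he S hP N hhom hmono (k-j) x, smul_smul]
    have h1 : k - j - 1 = k - (j+1) := by omega
    rw [h1]
    congr 1

lemma iterate_fMon_zero (e : Fin d → A)
    (he : ∀ i j, e i * e j + e j * e i = if i = j then (-2:A) else 0)
    (S : DunklData d) {P : Vd d → A} (hP : ContDiff ℝ (⊤:ℕ∞) P) (N : ℕ)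
    (hhom : ∀ (c : ℝ) (y : Vd d), P (c • y) = c ^ N • P y)
    (hmono : ∀ x : Vd d, diracD e S P x = 0) (k : ℕ) :
    ∀ j, k < j → (diracD e S)^[j] (fMon e P k) = fun _ => (0:A) := by
  have hzero : ∀ t : ℕ, (diracD e S)^[t] (fun _ => (0:A)) = fun _ => (0:A) := by
    intro t
    induction t with
    | zero => rfl
    | succ t ih =>
      rw [Function.iterate_succ_apply', ih]
      funext x
      exact diracD_zero e S x
  have hk1 : (diracD e S)^[k+1] (fMon e P k) = fun _ => (0:A) := by
    rw [Function.iterate_succ_apply', iterate_fMon e he S hP N hhom hmono k k le_rfl]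
    funext x
    rw [diracD_smul e S (ckG (dunklDim S) N k k) (F := fMon e P (k-k))
        ((contDiff_fMon e hP (k-k)).differentiable (by simp)) x]
    rw [Nat.sub_self, fMon_zero e P, hmono x, smul_zero]
  intro j hj
  obtain ⟨t, rfl⟩ : ∃ t, j = t + (k+1) := ⟨j - (k+1), by omega⟩
  rw [Function.iterate_add_apply, hk1, hzero t]

lemma vecC_pow_even (e : Fin d → A)
    (he : ∀ i j, e i * e j + e j * e i = if i = j then (-2:A) else 0)
    (x : Vd d) {m : ℕ} (hm : Even m) :
    vecC e x ^ m = (((-1:ℝ)^(m/2)) * ‖x‖^m) • (1:A) := by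
  obtain ⟨q, rfl⟩ := hm
  have hdiv : (q+q)/2 = q := by omega
  rw [hdiv]
  clear hdiv
  induction q with
  | zero => simp
  | succ q ih =>
    rw [show q+1+(q+1) = (q+q)+2 from by ring, pow_add, ih, pow_two, vecC_sq e he x,
      smul_mul_assoc, one_mul, smul_smul]
    congr 1
    ring

lemma vecC_pow_odd (e : Fin d → A)
    (he : ∀ i j, e i * e j + e j * e i = if i = j then (-2:A) else 0)
    (x : Vd d) {m : ℕ} (hm : ¬ Even m) :
    vecC e x ^ m = (((-1:ℝ)^(m/2)) * ‖x‖^(m-1)) • vecC e x := by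
  obtain ⟨q, rfl⟩ := Nat.not_even_iff_odd.mp hm
  have hdiv : (2*q+1)/2 = q := by omega
  have hsub : 2*q+1-1 = 2*q := by omega
  rw [hdiv, hsub, pow_succ, vecC_pow_even e he x (even_two_mul q),
    show (2*q)/2 = q from by omega, smul_mul_assoc, one_mul]

end AuxCK

/-- The CK-extension of `x̲^k P_{n−k}(x̲)` (the series terminates after `n + 1` terms). -/
def ckVecPow (e : Fin d → A) (S : DunklData d) (k n : ℕ) (P : Vd d → A)
    (x : ℝ × Vd d) : A :=
  ∑ j ∈ Finset.range (n + 1),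
    ((-x.1) ^ j / (j.factorial : ℝ)) • (diracD e S)^[j] (fun y => vecC e y ^ k * P y) x.2

section AuxCK2
variable {d : ℕ} {A : Type*} [NormedRing A] [NormedAlgebra ℝ A]

lemma ck_sum (e : Fin d → A)
    (he : ∀ i j, e i * e j + e j * e i = if i = j then (-2:A) else 0)
    (S : DunklData d) {P : Vd d → A} (hP : ContDiff ℝ (⊤:ℕ∞) P) (N : ℕ)
    (hhom : ∀ (c : ℝ) (y : Vd d), P (c • y) = c ^ N • P y)
    (hmono : ∀ x : Vd d, diracD e S P x = 0) (k n : ℕ) (hkn : k ≤ n) (x : ℝ × Vd d) :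
    ckVecPow e S k n P x
      = ∑ j ∈ Finset.range (k+1),
          (((-1:ℝ)^j * ckG (dunklDim S) N k j / (j.factorial : ℝ)) * x.1 ^ j)
            • (vecC e x.2 ^ (k-j) * P x.2) := by
  rw [ckVecPow]
  have hfk : (fun y => vecC e y ^ k * P y) = fMon e P k := rfl
  rw [hfk]
  have hsub : Finset.range (k+1) ⊆ Finset.range (n+1) := Finset.range_subset_range.mpr (by omega)
  have hz : ∀ j ∈ Finset.range (n+1), j ∉ Finset.range (k+1) →
      ((-x.1) ^ j / (j.factorial : ℝ)) • (diracD e S)^[j] (fMon e P k) x.2 = 0 := by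
    intro j _ hj2
    have hkj : k < j := by
      simp only [Finset.mem_range, not_lt] at hj2
      omega
    rw [iterate_fMon_zero e he S hP N hhom hmono k j hkj]
    simp
  rw [← Finset.sum_subset hsub hz]
  refine Finset.sum_congr rfl fun j hj => ?_
  have hjk : j ≤ k := by
    have := Finset.mem_range.mp hj
    omega
  rw [iterate_fMon e he S hP N hhom hmono k j hjk, smul_smul]
  show _ • (fMon e P (k-j) x.2) = _ • (vecC e x.2 ^ (k-j) * P x.2)
  congr 1
  rw [neg_pow]
  ring


end AuxCK2

/-- The CK-extension of `x̲^k P_{n−k}(x̲)` has the form `(Σ_{j=0}^k c_j x₀^j x̲^{k−j}) P_{n−k}(x̲)`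
with `c₀ = 1`; equivalently it equals `(U(x₀,|x̲|) + ω̲ V(x₀,|x̲|)) P_{n−k}(x̲)` with `U`, `V`
real-valued homogeneous polynomials of degree `k` in `(x₀, r)`. -/
theorem ck_extension_vec_pow_monogenic (d : ℕ) (A : Type*) [NormedRing A] [NormedAlgebra ℝ A]
    (e : Fin d → A) (he : CliffordRel e) (S : DunklData d) (hγ : 0 < gam S)
    (k n : ℕ) (hkn : k ≤ n) (P : Vd d → A) (hP : ContDiff ℝ (⊤ : ℕ∞) P)
    (hhom : ∀ (c : ℝ) (x : Vd d), P (c • x) = (c ^ (n - k)) • P x)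
    (hmono : ∀ x : Vd d, diracD e S P x = 0) :
    (∃ c : Fin (k + 1) → ℝ, c 0 = 1 ∧
      ∀ x : ℝ × Vd d,
        ckVecPow e S k n P x
          = ∑ j : Fin (k + 1),
              (c j * x.1 ^ (j : ℕ)) • (vecC e x.2 ^ (k - (j : ℕ)) * P x.2)) ∧
    (∃ U V : ℝ × ℝ → ℝ, ContDiff ℝ (⊤ : ℕ∞) U ∧ ContDiff ℝ (⊤ : ℕ∞) V
      ∧ (∀ (c : ℝ) (p : ℝ × ℝ), U (c • p) = c ^ k * U p)
      ∧ (∀ (c : ℝ) (p : ℝ × ℝ), V (c • p) = c ^ k * V p)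
      ∧ ∀ x : ℝ × Vd d, x.2 ≠ 0 →
          ckVecPow e S k n P x
            = U (x.1, ‖x.2‖) • P x.2
              + V (x.1, ‖x.2‖) • ((‖x.2‖⁻¹ • vecC e x.2) * P x.2)) := by
  classical
  have he1 := he.1
  set μ := dunklDim S with hμ
  set N := n - k with hN
  have hckmain : ∀ x : ℝ × Vd d,
      ckVecPow e S k n P x
        = ∑ j ∈ Finset.range (k+1),
            (((-1:ℝ)^j * ckG μ N k j / (j.factorial : ℝ)) * x.1 ^ j)
              • (vecC e x.2 ^ (k-j) * P x.2) :=
    fun x => ck_sum e he1 S hP N hhom hmono k n hkn x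
  constructor
  · refine ⟨fun j => (-1:ℝ)^(j:ℕ) * ckG μ N k (j:ℕ) / (((j:ℕ)).factorial : ℝ), ?_, ?_⟩
    · simp [ckG]
    · intro x
      rw [hckmain x, ← Fin.sum_univ_eq_sum_range
        (fun j => (((-1:ℝ)^j * ckG μ N k j / (j.factorial : ℝ)) * x.1 ^ j)
          • (vecC e x.2 ^ (k-j) * P x.2)) (k+1)]
  · refine ⟨fun p => ∑ j ∈ Finset.range (k+1),
        if Even (k-j) then
          ((-1:ℝ)^j * ckG μ N k j / (j.factorial : ℝ)) * (-1:ℝ)^((k-j)/2) * p.1^j * p.2^(k-j)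
        else 0,
      fun p => ∑ j ∈ Finset.range (k+1),
        if Even (k-j) then 0 else
          ((-1:ℝ)^j * ckG μ N k j / (j.factorial : ℝ)) * (-1:ℝ)^((k-j)/2) * p.1^j * p.2^(k-j),
      ?_, ?_, ?_, ?_, ?_⟩
    · apply ContDiff.sum
      intro j _
      by_cases hj : Even (k - j)
      · simp only [if_pos hj]
        exact ((contDiff_const.mul (contDiff_fst.pow j)).mul (contDiff_snd.pow (k-j)))
      · simp only [if_neg hj]
        exact contDiff_const
    · apply ContDiff.sum
      intro j _
      by_cases hj : Even (k - j)
      · simp only [if_pos hj]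
        exact contDiff_const
      · simp only [if_neg hj]
        exact ((contDiff_const.mul (contDiff_fst.pow j)).mul (contDiff_snd.pow (k-j)))
    · intro c p
      rw [Finset.mul_sum]
      refine Finset.sum_congr rfl fun j hj => ?_
      have hjk : j + (k - j) = k := by
        have := Finset.mem_range.mp hj
        omega
      by_cases hev : Even (k - j)
      · simp only [if_pos hev, Prod.smul_fst, Prod.smul_snd, smul_eq_mul, mul_pow]
        rw [show (c:ℝ)^k = c^j * c^(k-j) from by rw [← pow_add, hjk]]
        ring
      · simp only [if_neg hev, mul_zero]
    · intro c p
      rw [Finset.mul_sum]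
      refine Finset.sum_congr rfl fun j hj => ?_
      have hjk : j + (k - j) = k := by
        have := Finset.mem_range.mp hj
        omega
      by_cases hev : Even (k - j)
      · simp only [if_pos hev, mul_zero]
      · simp only [if_neg hev, Prod.smul_fst, Prod.smul_snd, smul_eq_mul, mul_pow]
        rw [show (c:ℝ)^k = c^j * c^(k-j) from by rw [← pow_add, hjk]]
        ring
    · intro x hx2
      have hr : ‖x.2‖ ≠ 0 := norm_ne_zero_iff.mpr hx2
      rw [hckmain x, Finset.sum_smul, Finset.sum_smul, ← Finset.sum_add_distrib]
      refine Finset.sum_congr rfl fun j hj => ?_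
      by_cases hev : Even (k - j)
      · rw [if_pos hev, if_pos hev, zero_smul, add_zero,
          vecC_pow_even e he1 x.2 hev, smul_mul_assoc, one_mul, smul_smul]
        congr 1
        ring
      · rw [if_neg hev, if_neg hev, zero_smul, zero_add,
          vecC_pow_odd e he1 x.2 hev, smul_mul_assoc, smul_smul, smul_mul_assoc, smul_smul]
        congr 1
        have hne : k - j ≠ 0 := by
          intro h0
          exact hev (by simp [h0])
        rw [show k - j = (k - j - 1) + 1 from by omega, pow_succ]
        field_simp
        ring_nf; simp only [Nat.add_sub_cancel_left]
end
end
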